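/- arXiv:0911.3973 — 4 statements merged into one kernel-verified Lean document; each statement's English description precedes it below -/
import Mathlib

section
/- Let U be multiplication by a nonnegative continuous function u on L²[0,1] with min u = 0, and let K be a compact self-adjoint operator on L²[0,1] having only finitely many positive eigenvalues, say n−1 of them. Then H = U − K has at most n−1 eigenvalues (counted with multiplicity) strictly below 0 = inf σ_e(H). -/
open MeasureTheory Set Filter

noncomputable section

/-- Lebesgue measure restricted to `[0,1]`. -/
abbrev μ01 : Measure ℝ := volume.restrict (Set.Icc 0 1)

/-- The Hilbert space `L²[0,1]` of complex-valued square-integrable functions. -/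
abbrev L2 : Type := Lp ℂ 2 μ01

/-- The essential spectrum: the spectrum minus the isolated eigenvalues of finite
multiplicity. -/
def essSpec {H : Type*} [NormedAddCommGroup H] [InnerProductSpace ℂ H]
    (A : H →L[ℂ] H) : Set ℂ :=
  spectrum ℂ A \
    {z | Module.End.HasEigenvalue (A : H →ₗ[ℂ] H) z ∧
      FiniteDimensional ℂ (Module.End.eigenspace (A : H →ₗ[ℂ] H) z) ∧
      ∃ ε > 0, spectrum ℂ A ∩ Metric.ball z ε = {z}}

section Abstract

variable {E : Type*} [NormedAddCommGroup E] [InnerProductSpace ℂ E]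

local notation "⟪" x ", " y "⟫" => @inner ℂ _ _ x y

lemma cs_aux (A : E →L[ℂ] E) (hsym : ∀ x y : E, ⟪A x, y⟫ = ⟪x, A y⟫)
    (M : Submodule ℂ E) (hpos : ∀ x ∈ M, 0 ≤ (⟪x, A x⟫).re)
    {x y : E} (hx : x ∈ M) (hy : y ∈ M) :
    ‖⟪x, A y⟫‖ ^ 2 ≤ (⟪x, A x⟫).re * (⟪y, A y⟫).re := by
  by_cases hB : ⟪x, A y⟫ = 0
  · rw [hB]
    simpa using mul_nonneg (hpos x hx) (hpos y hy)
  · set B : ℂ := ⟪x, A y⟫ with hBdef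
    have hBnorm : (0:ℝ) < ‖B‖ := norm_pos_iff.mpr hB
    set θ : ℂ := (starRingEnd ℂ) B / (‖B‖ : ℂ) with hθ
    have hBB : B * (starRingEnd ℂ) B = ((‖B‖:ℂ) * ‖B‖) := by
      rw [Complex.mul_conj, Complex.normSq_eq_norm_sq]
      push_cast
      ring
    have hn0 : (‖B‖ : ℂ) ≠ 0 := by
      simpa using hBnorm.ne'
    have hBB' : (starRingEnd ℂ) B * B = ((‖B‖:ℂ) * ‖B‖) := by rw [mul_comm]; exact hBB
    have hθB : θ * B = (‖B‖ : ℂ) := by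
      rw [hθ, div_mul_eq_mul_div, hBB', mul_div_assoc, div_self hn0, mul_one]
    have hccB : (starRingEnd ℂ) θ * (starRingEnd ℂ) B = (‖B‖ : ℂ) := by
      rw [← map_mul, hθB, Complex.conj_ofReal]
    have hθθ : (starRingEnd ℂ) θ * θ = 1 := by
      rw [hθ, map_div₀, Complex.conj_conj, Complex.conj_ofReal, div_mul_div_comm, hBB,
        div_self (mul_ne_zero hn0 hn0)]
    have hyx : ⟪y, A x⟫ = (starRingEnd ℂ) B := by
      have h := inner_conj_symm (𝕜 := ℂ) y (A x)
      rw [hsym x y] at h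
      exact h.symm
    have expand : ∀ t : ℝ, (0:ℝ) ≤ (⟪y, A y⟫).re * t ^ 2 + (-2 * ‖B‖) * t + (⟪x, A x⟫).re := by
      intro t
      have hz : x - ((t:ℂ) * θ) • y ∈ M := M.sub_mem hx (M.smul_mem _ hy)
      have h0 := hpos _ hz
      have hcalc : ⟪x - ((t:ℂ) * θ) • y, A (x - ((t:ℂ) * θ) • y)⟫
          = ⟪x, A x⟫ - ((2 * ‖B‖ * t : ℝ) : ℂ) + ((t^2 : ℝ) : ℂ) * ⟪y, A y⟫ := by
        simp only [map_sub, ContinuousLinearMap.map_smul, inner_sub_left, inner_sub_right,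
          inner_smul_left, inner_smul_right, map_mul, Complex.conj_ofReal, hyx, ← hBdef]
        push_cast
        linear_combination (-(t:ℂ)) * hθB + (-(t:ℂ)) * hccB + ((t:ℂ)^2 * ⟪y, A y⟫) * hθθ
      rw [hcalc] at h0
      simp only [Complex.add_re, Complex.sub_re, Complex.ofReal_re, Complex.re_ofReal_mul] at h0
      nlinarith [h0]
    have hdisc := discrim_le_zero (a := (⟪y, A y⟫).re) (b := -2 * ‖B‖) (c := (⟪x, A x⟫).re)
      (by intro t; nlinarith [expand t])
    rw [discrim] at hdisc
    nlinarith [hdisc, hBnorm]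

end Abstract

section Abstract2

variable {E : Type*} [NormedAddCommGroup E] [InnerProductSpace ℂ E] [CompleteSpace E]

local notation "⟪" x ", " y "⟫" => @inner ℂ _ _ x y

/-- A compact symmetric operator whose quadratic form is somewhere positive on a closed
invariant submodule `M` has an eigenvector in `M` with positive eigenvalue. -/
lemma inner_self_ofReal {E : Type*} [NormedAddCommGroup E] [InnerProductSpace ℂ E] (x : E) :
    (inner ℂ x x : ℂ) = ((‖x‖^2 : ℝ) : ℂ) := by
  rw [inner_self_eq_norm_sq_to_K]; norm_cast

set_option maxHeartbeats 2000000 in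
lemma exists_eigen (T : E →L[ℂ] E) (hcpt : IsCompactOperator (T : E → E))
    (hsym : ∀ x y : E, ⟪T x, y⟫ = ⟪x, T y⟫)
    (M : Submodule ℂ E) (hMc : IsClosed (M : Set E)) (hinv : ∀ x ∈ M, T x ∈ M)
    {f : E} (hf : f ∈ M) (hpos : 0 < (⟪f, T f⟫).re) :
    ∃ c : ℝ, 0 < c ∧ ∃ g, g ∈ M ∧ g ≠ 0 ∧ T g = (c : ℂ) • g := by
  have hf0 : f ≠ 0 := by
    rintro rfl
    simp at hpos
  have hfn : (0:ℝ) < ‖f‖ := norm_pos_iff.mpr hf0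
  set f₀ : E := ((‖f‖⁻¹ : ℝ) : ℂ) • f with hf₀
  have hf₀M : f₀ ∈ M := M.smul_mem _ hf
  have hf₀n : ‖f₀‖ = 1 := by
    rw [hf₀, norm_smul]
    simp [abs_of_nonneg (inv_nonneg.mpr hfn.le), inv_mul_cancel₀ hfn.ne']
  have hf₀pos : 0 < (⟪f₀, T f₀⟫).re := by
    rw [hf₀, ContinuousLinearMap.map_smul, inner_smul_left, inner_smul_right,
      Complex.conj_ofReal, ← mul_assoc, ← Complex.ofReal_mul, Complex.re_ofReal_mul]
    have h1 : (0:ℝ) < ‖f‖⁻¹ := inv_pos.mpr hfn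
    exact mul_pos (mul_pos h1 h1) hpos
  -- the sup of the quadratic form over the unit ball of M
  set S : Set ℝ := (fun g => (⟪g, T g⟫).re) '' {g : E | g ∈ M ∧ ‖g‖ ≤ 1} with hS
  have hSne : S.Nonempty := ⟨_, ⟨f₀, ⟨hf₀M, hf₀n.le⟩, rfl⟩⟩
  have hSbdd : BddAbove S := by
    refine ⟨‖T‖, ?_⟩
    rintro r ⟨g, ⟨hgM, hgn⟩, rfl⟩
    calc (⟪g, T g⟫).re ≤ ‖(⟪g, T g⟫ : ℂ)‖ := Complex.re_le_norm _
      _ ≤ ‖g‖ * ‖T g‖ := norm_inner_le_norm g (T g)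
      _ ≤ 1 * (‖T‖ * ‖g‖) := by
          exact mul_le_mul hgn (T.le_opNorm g) (norm_nonneg _) zero_le_one
      _ ≤ 1 * (‖T‖ * 1) := by
          have := mul_le_mul_of_nonneg_left hgn (norm_nonneg T)
          nlinarith [this]
      _ = ‖T‖ := by ring
  set c : ℝ := sSup S with hc
  have hcpos : 0 < c := lt_of_lt_of_le hf₀pos (le_csSup hSbdd ⟨f₀, ⟨hf₀M, hf₀n.le⟩, rfl⟩)
  -- the key bound : the quadratic form is at most c ‖g‖² on M
  have key : ∀ g ∈ M, (⟪g, T g⟫).re ≤ c * ‖g‖ ^ 2 := by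
    intro g hgM
    by_cases hg0 : g = 0
    · simp [hg0]
    · have hgn : (0:ℝ) < ‖g‖ := norm_pos_iff.mpr hg0
      set g₀ : E := ((‖g‖⁻¹ : ℝ) : ℂ) • g with hg₀
      have hmem : (⟪g₀, T g₀⟫).re ∈ S := by
        refine ⟨g₀, ⟨M.smul_mem _ hgM, ?_⟩, rfl⟩
        rw [hg₀, norm_smul]
        simp [abs_of_nonneg (inv_nonneg.mpr hgn.le), inv_mul_cancel₀ hgn.ne']
      have hle : (⟪g₀, T g₀⟫).re ≤ c := le_csSup hSbdd hmem
      rw [hg₀, ContinuousLinearMap.map_smul, inner_smul_left, inner_smul_right,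
        Complex.conj_ofReal, ← mul_assoc, ← Complex.ofReal_mul, Complex.re_ofReal_mul] at hle
      have h2 : ‖g‖⁻¹ * ‖g‖⁻¹ * (⟪g, T g⟫).re ≤ c := hle
      have h3 : (0:ℝ) < ‖g‖ * ‖g‖ := by positivity
      have h5 := mul_le_mul_of_nonneg_right h2 h3.le
      have h6 : (‖g‖⁻¹ * ‖g‖⁻¹ * (⟪g, T g⟫).re) * (‖g‖ * ‖g‖) = (⟪g, T g⟫).re := by
        field_simp
      nlinarith [h5, h6]
  -- the operator A = c - T, positive on M
  set A : E →L[ℂ] E := ((c:ℂ) • ContinuousLinearMap.id ℂ E) - T with hA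
  have hAapp : ∀ x : E, A x = (c:ℂ) • x - T x := fun x => rfl
  have hAsym : ∀ x y : E, ⟪A x, y⟫ = ⟪x, A y⟫ := by
    intro x y
    rw [hAapp, hAapp, inner_sub_left, inner_sub_right, inner_smul_left, inner_smul_right,
      Complex.conj_ofReal, hsym x y]
  have hApos : ∀ x ∈ M, 0 ≤ (⟪x, A x⟫).re := by
    intro x hxM
    rw [hAapp, inner_sub_right, inner_smul_right]
    rw [Complex.sub_re]
    have h1 : ((c:ℂ) * ⟪x, x⟫).re = c * ‖x‖ ^ 2 := by
      rw [inner_self_ofReal x, ← Complex.ofReal_mul, Complex.ofReal_re]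
    rw [h1]
    linarith [key x hxM]
  have hAinv : ∀ x ∈ M, A x ∈ M := by
    intro x hxM
    rw [hAapp]
    exact M.sub_mem (M.smul_mem _ hxM) (hinv x hxM)
  -- maximizing sequence
  have hseq : ∀ n : ℕ, ∃ g : E, g ∈ M ∧ ‖g‖ ≤ 1 ∧ c - 1/(n+1) < (⟪g, T g⟫).re := by
    intro n
    have h1 : c - 1/(n+1) < c := by
      have : (0:ℝ) < 1/(n+1) := by positivity
      linarith
    obtain ⟨r, hrS, hrlt⟩ := exists_lt_of_lt_csSup hSne h1
    obtain ⟨g, ⟨hgM, hgn⟩, rfl⟩ := hrS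
    exact ⟨g, hgM, hgn, hrlt⟩
  choose g hgM hgn hgc using hseq
  -- A g n → 0
  have hAg2 : ∀ n : ℕ, ‖A (g n)‖ ^ 2 ≤ ‖A‖ * (1/(n+1)) := by
    intro n
    have hcs := cs_aux A hAsym M hApos (hAinv (g n) (hgM n)) (hgM n)
    have h1 : ⟪A (g n), A (g n)⟫ = ((‖A (g n)‖ ^ 2 : ℝ) : ℂ) := inner_self_ofReal _
    have h2 : ‖⟪A (g n), A (g n)⟫‖ = ‖A (g n)‖ ^ 2 := by
      rw [h1, Complex.norm_real]
      exact abs_of_nonneg (sq_nonneg _)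
    have h3 : (⟪A (g n), A (A (g n))⟫).re ≤ ‖A‖ * ‖A (g n)‖ ^ 2 := by
      calc (⟪A (g n), A (A (g n))⟫).re ≤ ‖(⟪A (g n), A (A (g n))⟫ : ℂ)‖ := Complex.re_le_norm _
        _ ≤ ‖A (g n)‖ * ‖A (A (g n))‖ := norm_inner_le_norm _ _
        _ ≤ ‖A (g n)‖ * (‖A‖ * ‖A (g n)‖) := by
            exact mul_le_mul_of_nonneg_left (A.le_opNorm _) (norm_nonneg _)
        _ = ‖A‖ * ‖A (g n)‖ ^ 2 := by ring
    have h4 : (⟪g n, A (g n)⟫).re ≤ 1/(n+1) := by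
      rw [hAapp, inner_sub_right, inner_smul_right, Complex.sub_re]
      have h5 : ((c:ℂ) * ⟪g n, g n⟫).re = c * ‖g n‖ ^ 2 := by
        rw [inner_self_ofReal, ← Complex.ofReal_mul, Complex.ofReal_re]
      rw [h5]
      have h6 : c * ‖g n‖ ^ 2 ≤ c := by
        have h7 : ‖g n‖ ^ 2 ≤ 1 := by nlinarith [hgn n, norm_nonneg (g n)]
        nlinarith [h7, hcpos]
      linarith [hgc n]
    have h7 : (0 : ℝ) ≤ (⟪g n, A (g n)⟫).re := hApos _ (hgM n)
    have h8 : (0 : ℝ) ≤ (⟪A (g n), A (A (g n))⟫).re := hApos _ (hAinv _ (hgM n))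
    rw [h2] at hcs
    -- hcs : (‖A (g n)‖^2)^2 ≤ re⟪Ag, A Ag⟫ * re⟪g, A g⟫
    by_cases hz : ‖A (g n)‖ = 0
    · rw [hz]
      have : (0:ℝ) ≤ ‖A‖ * (1/(n+1)) := by positivity
      simpa using this
    · have hzpos : (0:ℝ) < ‖A (g n)‖ ^ 2 := by positivity
      nlinarith [hcs, h3, h4, h7, h8, hzpos, mul_le_mul h3 h4 h7 (by positivity : (0:ℝ) ≤ ‖A‖ * ‖A (g n)‖ ^ 2)]
  have hAg0 : Tendsto (fun n => A (g n)) atTop (nhds 0) := by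
    rw [tendsto_zero_iff_norm_tendsto_zero]
    have hb : ∀ n : ℕ, ‖A (g n)‖ ≤ Real.sqrt (‖A‖ * (1/(n+1))) := by
      intro n
      rw [← Real.sqrt_sq (norm_nonneg (A (g n)))]
      exact Real.sqrt_le_sqrt (hAg2 n)
    have hsq : Tendsto (fun n : ℕ => Real.sqrt (‖A‖ * (1/(n+1)))) atTop (nhds 0) := by
      have h1 : Tendsto (fun n : ℕ => ‖A‖ * (1/((n:ℝ)+1))) atTop (nhds 0) := by
        have h0 := tendsto_one_div_add_atTop_nhds_zero_nat (𝕜 := ℝ)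
        have h2 := h0.const_mul ‖A‖
        simpa using h2
      have h3 := (Real.continuous_sqrt.tendsto 0).comp h1
      simpa [Function.comp_def, Real.sqrt_zero] using h3
    exact squeeze_zero (fun n => norm_nonneg _) hb hsq
  -- extract a convergent subsequence of T (g n)
  obtain ⟨Kset, hKsetc, hKsub⟩ := IsCompactOperator.image_closedBall_subset_compact (f := (T : E →ₗ[ℂ] E)) hcpt 1
  have hTg : ∀ n, T (g n) ∈ Kset := by
    intro n
    apply hKsub
    exact ⟨g n, by simpa [Metric.mem_closedBall] using (hgn n), rfl⟩
  obtain ⟨h, hhK, φ, hφ, hTgφ⟩ := hKsetc.tendsto_subseq hTg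
  -- the subsequence g (φ n) converges to g₀ := c⁻¹ h
  set g₀ : E := ((c⁻¹ : ℝ) : ℂ) • h with hg₀def
  have hgid : ∀ n, g n = ((c⁻¹ : ℝ) : ℂ) • (A (g n) + T (g n)) := by
    intro n
    rw [hAapp]
    rw [sub_add_cancel]
    rw [smul_smul]
    rw [← Complex.ofReal_mul, inv_mul_cancel₀ hcpos.ne']
    simp
  have hgφ : Tendsto (fun n => g (φ n)) atTop (nhds g₀) := by
    have h1 : Tendsto (fun n => A (g (φ n)) + T (g (φ n))) atTop (nhds (0 + h)) :=
      ((hAg0.comp (hφ.tendsto_atTop)).add hTgφ)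
    have h2 := h1.const_smul ((c⁻¹ : ℝ) : ℂ)
    rw [zero_add] at h2
    have h3 : (fun n => ((c⁻¹ : ℝ) : ℂ) • (A (g (φ n)) + T (g (φ n)))) = fun n => g (φ n) := by
      funext n
      rw [← hgid (φ n)]
    rw [h3] at h2
    exact h2
  have hg₀M : g₀ ∈ M := hMc.mem_of_tendsto hgφ (Eventually.of_forall (fun n => hgM (φ n)))
  have hTg₀ : T g₀ = h := by
    have h1 : Tendsto (fun n => T (g (φ n))) atTop (nhds (T g₀)) :=
      (T.continuous.tendsto g₀).comp hgφ
    exact tendsto_nhds_unique h1 hTgφ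
  have hcg₀ : T g₀ = (c : ℂ) • g₀ := by
    rw [hTg₀, hg₀def, smul_smul, ← Complex.ofReal_mul, mul_inv_cancel₀ hcpos.ne']
    simp
  -- the quadratic form converges to c, so g₀ ≠ 0
  have hq : Tendsto (fun n => (⟪g (φ n), T (g (φ n))⟫).re) atTop (nhds ((⟪g₀, T g₀⟫).re)) := by
    have h1 : Tendsto (fun n => (g (φ n), T (g (φ n)))) atTop (nhds (g₀, T g₀)) :=
      hgφ.prodMk_nhds ((T.continuous.tendsto g₀).comp hgφ)
    have h2 : Continuous fun p : E × E => (⟪p.1, p.2⟫ : ℂ) := continuous_inner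
    exact (Complex.continuous_re.tendsto _).comp ((h2.tendsto _).comp h1)
  have hqc : Tendsto (fun n => (⟪g (φ n), T (g (φ n))⟫).re) atTop (nhds c) := by
    have hup : ∀ n : ℕ, (⟪g (φ n), T (g (φ n))⟫).re ≤ c := by
      intro n
      calc (⟪g (φ n), T (g (φ n))⟫).re ≤ c * ‖g (φ n)‖ ^ 2 := key _ (hgM _)
        _ ≤ c := by
            have h7 : ‖g (φ n)‖ ^ 2 ≤ 1 := by nlinarith [hgn (φ n), norm_nonneg (g (φ n))]
            nlinarith [h7, hcpos]
    have hlow : ∀ n : ℕ, c - 1/(n+1) < (⟪g (φ n), T (g (φ n))⟫).re := by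
      intro n
      have := hgc (φ n)
      have hφn : (n:ℝ) + 1 ≤ (φ n : ℝ) + 1 := by
        have hle : n ≤ φ n := hφ.le_apply
        have h9 : (n:ℝ) ≤ (φ n : ℝ) := Nat.cast_le.mpr hle
        linarith
      have : c - 1/(n+1) ≤ c - 1/((φ n : ℝ)+1) := by
        have h1 : (0:ℝ) < (n:ℝ)+1 := by positivity
        have h2 : (0:ℝ) < (φ n:ℝ)+1 := by positivity
        have := one_div_le_one_div_of_le h1 hφn
        linarith
      linarith [hgc (φ n)]
    have h1 : Tendsto (fun n : ℕ => c - 1/((n:ℝ)+1)) atTop (nhds c) := by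
      have := tendsto_one_div_add_atTop_nhds_zero_nat (𝕜 := ℝ)
      have h2 := (tendsto_const_nhds (x := c) (f := atTop (α := ℕ))).sub this
      simpa using h2
    exact tendsto_of_tendsto_of_tendsto_of_le_of_le h1 tendsto_const_nhds
      (fun n => (hlow n).le) hup
  have hqeq : (⟪g₀, T g₀⟫).re = c := tendsto_nhds_unique hq hqc
  have hg₀0 : g₀ ≠ 0 := by
    intro h0
    rw [h0] at hqeq
    simp at hqeq
    linarith [hcpos]
  exact ⟨c, hcpos, g₀, hg₀M, hg₀0, hcg₀⟩


set_option maxHeartbeats 1000000 in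
omit [CompleteSpace E] in
lemma quad_neg (T : E →L[ℂ] E) (hsym : ∀ x y : E, ⟪T x, y⟫ = ⟪x, T y⟫)
    {f : E} (hf : f ∈ ⨆ r : ℝ, ⨆ _ : r < 0, Module.End.eigenspace (T : E →ₗ[ℂ] E) (r:ℂ))
    (hf0 : f ≠ 0) : (⟪f, T f⟫).re < 0 := by
  have hsym' : (T : E →ₗ[ℂ] E).IsSymmetric := fun x y => hsym x y
  rw [Submodule.mem_iSup_iff_exists_finsupp] at hf
  obtain ⟨a, ha, hsum⟩ := hf
  have hmem : ∀ r : ℝ, r < 0 → a r ∈ Module.End.eigenspace (T : E →ₗ[ℂ] E) (r:ℂ) := by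
    intro r hr
    have h := ha r
    rwa [iSup_pos hr] at h
  have hzero : ∀ r : ℝ, ¬ r < 0 → a r = 0 := by
    intro r hr
    have h := ha r
    rw [iSup_neg hr] at h
    simpa using h
  have hTa : ∀ r : ℝ, T (a r) = (r:ℂ) • a r := by
    intro r
    by_cases hr : r < 0
    · exact Module.End.mem_eigenspace_iff.mp (hmem r hr)
    · rw [hzero r hr]; simp
  have horth : ∀ r s : ℝ, r ≠ s → ⟪a r, a s⟫ = 0 := by
    intro r s hrs
    by_cases hr : r < 0
    · by_cases hs : s < 0
      · have hne : (r:ℂ) ≠ (s:ℂ) := by exact_mod_cast hrs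
        have h := hsym'.orthogonalFamily_eigenspaces hne ⟨a r, hmem r hr⟩ ⟨a s, hmem s hs⟩
        simpa using h
      · rw [hzero s hs, inner_zero_right]
    · rw [hzero r hr, inner_zero_left]
  have hf' : f = ∑ r ∈ a.support, a r := by rw [← hsum]; rfl
  have hTf : T f = ∑ r ∈ a.support, (r:ℂ) • a r := by
    rw [hf', map_sum]
    exact Finset.sum_congr rfl (fun r _ => hTa r)
  have hinner : ⟪f, T f⟫ = ∑ r ∈ a.support, (r:ℂ) * ((‖a r‖^2 : ℝ):ℂ) := by
    rw [hTf]
    rw [inner_sum]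
    refine Finset.sum_congr rfl (fun s hs => ?_)
    rw [inner_smul_right, hf', sum_inner,
      Finset.sum_eq_single_of_mem s hs (fun r _ hrs => horth r s hrs), inner_self_ofReal]
  have hre : (⟪f, T f⟫).re = ∑ r ∈ a.support, r * ‖a r‖^2 := by
    rw [hinner, Complex.re_sum]
    refine Finset.sum_congr rfl (fun r _ => ?_)
    rw [← Complex.ofReal_mul, Complex.ofReal_re]
  rw [hre]
  have hne : a.support.Nonempty := by
    by_contra h
    rw [Finset.not_nonempty_iff_eq_empty] at h
    apply hf0
    rw [hf', h, Finset.sum_empty]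
  refine Finset.sum_neg (fun r hr => ?_) hne
  have har : a r ≠ 0 := Finsupp.mem_support_iff.mp hr
  have hrneg : r < 0 := by
    by_contra h
    exact har (hzero r h)
  have hpos2 : (0:ℝ) < ‖a r‖^2 := by
    have : (0:ℝ) < ‖a r‖ := norm_pos_iff.mpr har
    positivity
  exact mul_neg_of_neg_of_pos hrneg hpos2

lemma neg_on_orth (T : E →L[ℂ] E) (hcpt : IsCompactOperator (T : E → E))
    (hsym : ∀ x y : E, ⟪T x, y⟫ = ⟪x, T y⟫)
    {f : E} (hf : f ∈ (⨆ r : ℝ, ⨆ _ : 0 < r, Module.End.eigenspace (T : E →ₗ[ℂ] E) (r:ℂ))ᗮ) :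
    (⟪f, T f⟫).re ≤ 0 := by
  set V := ⨆ r : ℝ, ⨆ _ : 0 < r, Module.End.eigenspace (T : E →ₗ[ℂ] E) (r:ℂ) with hV
  by_contra hcon
  push_neg at hcon
  have hVinv : ∀ x ∈ V, T x ∈ V := by
    intro x hx
    refine Submodule.iSup_induction (motive := fun y => T y ∈ V) _ hx ?_ ?_ ?_
    · intro r y hy
      by_cases hr : 0 < r
      · rw [iSup_pos hr] at hy
        have hle : Module.End.eigenspace (T : E →ₗ[ℂ] E) (r:ℂ) ≤ V := by
          refine le_trans ?_ (le_iSup _ r)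
          rw [iSup_pos hr]
        have hTy : T y = (r:ℂ) • y := Module.End.mem_eigenspace_iff.mp hy
        rw [hTy]
        exact Submodule.smul_mem _ _ (hle hy)
      · rw [iSup_neg hr] at hy
        rw [(Submodule.mem_bot ℂ).mp hy]
        simp
    · simp
    · intro y z hy hz
      rw [map_add]
      exact Submodule.add_mem _ hy hz
  have hMinv : ∀ x ∈ Vᗮ, T x ∈ Vᗮ := by
    intro x hx
    rw [Submodule.mem_orthogonal] at hx ⊢
    intro v hv
    rw [← hsym v x]
    exact hx (T v) (hVinv v hv)
  obtain ⟨c, hc, g, hgM, hg0, hgeig⟩ :=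
    exists_eigen T hcpt hsym Vᗮ V.isClosed_orthogonal hMinv hf hcon
  have hgV : g ∈ V := by
    have hle : Module.End.eigenspace (T : E →ₗ[ℂ] E) (c:ℂ) ≤ V := by
      refine le_trans ?_ (le_iSup _ c)
      rw [iSup_pos hc]
    exact hle (Module.End.mem_eigenspace_iff.mpr hgeig)
  rw [Submodule.mem_orthogonal] at hgM
  exact hg0 (inner_self_eq_zero.mp (hgM g hgV))

end Abstract2

set_option maxHeartbeats 1000000 in
/-- If the compact self-adjoint operator `K` has only finitely many positive
eigenvalues, `m` of them counted with multiplicity (i.e. the span of the eigenspaces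
for positive eigenvalues has dimension `m`), then `U - K` has at most `m` eigenvalues
(counted with multiplicity) strictly below `0`, the bottom of its essential spectrum. -/
theorem stmt5 (u : ℝ → ℝ) (hu : ContinuousOn u (Icc 0 1))
    (hupos : ∀ t ∈ Icc (0:ℝ) 1, 0 ≤ u t) (hu0 : ∃ t ∈ Icc (0:ℝ) 1, u t = 0)
    (U K : L2 →L[ℂ] L2)
    (hU : ∀ f : L2, (U f : ℝ → ℂ) =ᵐ[μ01] fun t => (u t : ℂ) * f t)
    (hKc : IsCompactOperator (K : L2 → L2)) (hKsa : IsSelfAdjoint K) (m : ℕ)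
    (hfin : FiniteDimensional ℂ
      ↥(⨆ r : ℝ, ⨆ _ : 0 < r, Module.End.eigenspace (K : L2 →ₗ[ℂ] L2) (r : ℂ)))
    (hcount : Module.finrank ℂ
      ↥(⨆ r : ℝ, ⨆ _ : 0 < r, Module.End.eigenspace (K : L2 →ₗ[ℂ] L2) (r : ℂ)) = m) :
    FiniteDimensional ℂ
      ↥(⨆ r : ℝ, ⨆ _ : r < 0,
        Module.End.eigenspace ((U - K : L2 →L[ℂ] L2) : L2 →ₗ[ℂ] L2) (r : ℂ)) ∧
    Module.finrank ℂ
      ↥(⨆ r : ℝ, ⨆ _ : r < 0,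
        Module.End.eigenspace ((U - K : L2 →L[ℂ] L2) : L2 →ₗ[ℂ] L2) (r : ℂ)) ≤ m := by
  -- symmetry of U
  have hUsym : ∀ x y : L2, (inner ℂ (U x) y : ℂ) = inner ℂ x (U y) := by
    intro x y
    rw [MeasureTheory.L2.inner_def, MeasureTheory.L2.inner_def]
    apply integral_congr_ae
    filter_upwards [hU x, hU y] with a h1 h2
    rw [RCLike.inner_apply, RCLike.inner_apply, h1, h2]
    simp only [map_mul, Complex.conj_ofReal]
    ring
  -- positivity of U
  have hUpos : ∀ x : L2, 0 ≤ (inner ℂ x (U x) : ℂ).re := by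
    intro x
    have hint := MeasureTheory.L2.integrable_inner (𝕜 := ℂ) x (U x)
    have h2 := integral_re hint
    rw [MeasureTheory.L2.inner_def, ← RCLike.re_to_complex, ← h2]
    apply integral_nonneg_of_ae
    filter_upwards [hU x, ae_restrict_mem measurableSet_Icc] with a ha hmem
    rw [RCLike.inner_apply', ha]
    have hc : (starRingEnd ℂ) (x a) * ((u a : ℂ) * x a)
        = ((u a * Complex.normSq (x a) : ℝ) : ℂ) := by
      push_cast
      calc (starRingEnd ℂ) (x a) * ((u a : ℂ) * x a)
          = (u a : ℂ) * (x a * (starRingEnd ℂ) (x a)) := by ring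
        _ = (u a : ℂ) * (Complex.normSq (x a) : ℂ) := by rw [Complex.mul_conj]
    rw [hc]
    simp only [Pi.zero_apply, RCLike.re_to_complex, Complex.ofReal_re]
    exact mul_nonneg (hupos a hmem) (Complex.normSq_nonneg _)
  -- symmetry of K and of U - K
  have hKsym : ∀ x y : L2, (inner ℂ (K x) y : ℂ) = inner ℂ x (K y) := fun x y =>
    (ContinuousLinearMap.isSelfAdjoint_iff_isSymmetric.mp hKsa) x y
  have hTsym : ∀ x y : L2, (inner ℂ ((U - K) x) y : ℂ) = inner ℂ x ((U - K) y) := by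
    intro x y
    rw [ContinuousLinearMap.sub_apply, ContinuousLinearMap.sub_apply,
      inner_sub_left, inner_sub_right, hUsym x y, hKsym x y]
  set V := ⨆ r : ℝ, ⨆ _ : 0 < r, Module.End.eigenspace (K : L2 →ₗ[ℂ] L2) (r : ℂ) with hVdef
  set W := ⨆ r : ℝ, ⨆ _ : r < 0,
    Module.End.eigenspace ((U - K : L2 →L[ℂ] L2) : L2 →ₗ[ℂ] L2) (r : ℂ) with hWdef
  haveI : FiniteDimensional ℂ ↥V := hfin
  haveI : CompleteSpace ↥V := FiniteDimensional.complete ℂ ↥V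
  -- the projection W →ₗ V
  set φ : ↥W →ₗ[ℂ] ↥V := ((V.orthogonalProjectionOnto).toLinearMap).comp W.subtype with hφdef
  have hφinj : Function.Injective φ := by
    rw [← LinearMap.ker_eq_bot]
    rw [Submodule.eq_bot_iff]
    rintro ⟨x, hxW⟩ hx
    have hproj : V.orthogonalProjectionOnto x = 0 := hx
    have hxorth : x ∈ Vᗮ := Submodule.orthogonalProjectionOnto_eq_zero_iff.mp hproj
    rw [Submodule.mk_eq_zero]
    by_contra hx0
    have h1 := quad_neg (U - K) hTsym hxW hx0
    have h2 := neg_on_orth K hKc hKsym hxorth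
    have h3 := hUpos x
    have h4 : (inner ℂ x ((U - K) x) : ℂ).re
        = (inner ℂ x (U x) : ℂ).re - (inner ℂ x (K x) : ℂ).re := by
      rw [ContinuousLinearMap.sub_apply, inner_sub_right, Complex.sub_re]
    linarith
  constructor
  · exact FiniteDimensional.of_injective φ hφinj
  · calc Module.finrank ℂ ↥W ≤ Module.finrank ℂ ↥V :=
        LinearMap.finrank_le_finrank_of_injective hφinj
      _ = m := hcount
end
end

section
/- Let U be multiplication by a nonnegative continuous function u on L²[0,1] with max u = u_max, and let K be a compact self-adjoint operator with only finitely many negative eigenvalues, say n−1 of them. Then H = U − K has at most n−1 eigenvalues strictly above u_max = sup σ_e(H). -/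
open MeasureTheory Set Filter

noncomputable section

section General

variable {E : Type*} [NormedAddCommGroup E] [InnerProductSpace ℂ E]

local notation "⟪" x ", " y "⟫" => @inner ℂ _ _ x y
open RCLike

lemma re_coe_mul (r : ℝ) (z : ℂ) : re ((r : ℂ) * z) = r * re z := by
  simp [RCLike.re_to_complex, Complex.mul_re]

lemma four_re_inner {T : E →L[ℂ] E} (hT : (T : E →ₗ[ℂ] E).IsSymmetric) (x y : E) :
    4 * re ⟪T x, y⟫ = re ⟪T (x + y), x + y⟫ - re ⟪T (x - y), x - y⟫ := by
  have h1 : ⟪T (x+y), x+y⟫ = ⟪T x, x⟫ + ⟪T x, y⟫ + ⟪T y, x⟫ + ⟪T y, y⟫ := by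
    rw [map_add, inner_add_left, inner_add_right, inner_add_right]; ring
  have h2 : ⟪T (x-y), x-y⟫ = ⟪T x, x⟫ - ⟪T x, y⟫ - ⟪T y, x⟫ + ⟪T y, y⟫ := by
    rw [map_sub, inner_sub_left, inner_sub_right, inner_sub_right]; ring
  have h4 : ⟪T x, y⟫ = ⟪x, T y⟫ := hT x y
  have h3 : re ⟪T y, x⟫ = re ⟪T x, y⟫ := by
    rw [h4, ← inner_conj_symm, conj_re]
  rw [h1, h2, map_add, map_add, map_add, map_add, map_sub, map_sub, h3]; ring

lemma norm_le_of_quadform {T : E →L[ℂ] E} (hT : (T : E →ₗ[ℂ] E).IsSymmetric)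
    {M : ℝ} (hM : 0 ≤ M) (h : ∀ x, |re ⟪T x, x⟫| ≤ M * ‖x‖ ^ 2) : ‖T‖ ≤ M := by
  refine T.opNorm_le_bound hM (fun x => ?_)
  rcases eq_or_ne (T x) 0 with h0 | h0
  · simp only [h0, norm_zero]
    positivity
  rcases eq_or_ne x 0 with rfl | hx0
  · simp at h0
  have hTx : ‖T x‖ ≠ 0 := norm_ne_zero_iff.mpr h0
  set y : E := (((‖x‖ / ‖T x‖ : ℝ) : ℂ)) • T x with hy
  have hyn : ‖y‖ = ‖x‖ := by
    rw [hy, norm_smul, Complex.norm_real, Real.norm_of_nonneg (by positivity),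
      div_mul_cancel₀ _ hTx]
  have hre : re ⟪T x, y⟫ = ‖x‖ * ‖T x‖ := by
    rw [hy, inner_smul_right, re_coe_mul, inner_self_eq_norm_sq]
    field_simp
  have key : 4 * (‖x‖ * ‖T x‖) ≤ 4 * (M * ‖x‖ ^ 2) := by
    calc 4 * (‖x‖ * ‖T x‖) = re ⟪T (x+y), x+y⟫ - re ⟪T (x-y), x-y⟫ := by
          rw [← hre, four_re_inner hT]
      _ ≤ M * ‖x+y‖ ^ 2 + M * ‖x-y‖ ^ 2 := by
          have a1 := (abs_le.mp (h (x+y))).2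
          have a2 := (abs_le.mp (h (x-y))).1
          linarith
      _ = M * (‖x+y‖ * ‖x+y‖ + ‖x-y‖ * ‖x-y‖) := by ring
      _ = M * (2 * (‖x‖ * ‖x‖ + ‖y‖ * ‖y‖)) := by rw [parallelogram_law_with_norm_mul ℂ]
      _ = 4 * (M * ‖x‖ ^ 2) := by rw [hyn]; ring
  have hxpos : 0 < ‖x‖ := norm_pos_iff.mpr hx0
  have : ‖x‖ * ‖T x‖ ≤ ‖x‖ * (M * ‖x‖) := by nlinarith
  exact le_of_mul_le_mul_left this hxpos

/-- A nonzero compact symmetric operator has a nonzero real eigenvalue. -/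
lemma exists_eigen_s6 [CompleteSpace E] {T : E →L[ℂ] E} (hT : (T : E →ₗ[ℂ] E).IsSymmetric)
    (hc : IsCompactOperator (T : E → E)) (hne : T ≠ 0) :
    ∃ (c : ℝ) (g : E), c ≠ 0 ∧ g ≠ 0 ∧ T g = (c : ℂ) • g := by
  set M : ℝ := ‖T‖ with hM
  have hMpos : 0 < M := by
    rcases eq_or_lt_of_le (norm_nonneg T) with h | h
    · exact absurd (norm_eq_zero.mp h.symm) hne
    · exact h
  -- quadratic form scales by squares
  have hscale : ∀ (r : ℝ) (z : E), re ⟪T ((r : ℂ) • z), (r : ℂ) • z⟫ = r ^ 2 * re ⟪T z, z⟫ := by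
    intro r z
    rw [_root_.map_smul, inner_smul_left, inner_smul_right]
    have h5 : (starRingEnd ℂ) (r : ℂ) * ((r : ℂ) * ⟪T z, z⟫) = ((r ^ 2 : ℝ) : ℂ) * ⟪T z, z⟫ := by
      rw [Complex.conj_ofReal]
      push_cast
      ring
    rw [h5, re_coe_mul]
  -- a sequence of unit vectors almost attaining the norm
  have hseq : ∀ n : ℕ, ∃ x : E, ‖x‖ = 1 ∧ M - 1 / (n + 1) < |re ⟪T x, x⟫| := by
    intro n
    by_contra hcon
    push_neg at hcon
    set b : ℝ := max (M - 1 / (n + 1)) 0 with hb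
    have hball : ∀ x : E, |re ⟪T x, x⟫| ≤ b * ‖x‖ ^ 2 := by
      intro x
      rcases eq_or_ne x 0 with rfl | hx0
      · simp
      · have hxn : ‖x‖ ≠ 0 := norm_ne_zero_iff.mpr hx0
        have h1 : ‖((‖x‖⁻¹ : ℝ) : ℂ) • x‖ = 1 := by
          rw [norm_smul]
          simp [abs_of_nonneg (inv_nonneg.mpr (norm_nonneg x)), inv_mul_cancel₀ hxn]
        have h2 := hcon _ h1
        rw [hscale] at h2
        have h3 : |(‖x‖⁻¹) ^ 2 * re ⟪T x, x⟫| = (‖x‖⁻¹) ^ 2 * |re ⟪T x, x⟫| := by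
          rw [abs_mul, abs_of_nonneg (by positivity)]
        rw [h3] at h2
        have h4 : (‖x‖⁻¹) ^ 2 * |re ⟪T x, x⟫| ≤ b := le_trans h2 (le_max_left _ _)
        have h5 : 0 < (‖x‖) ^ 2 := by positivity
        calc |re ⟪T x, x⟫| = ((‖x‖⁻¹) ^ 2 * |re ⟪T x, x⟫|) * ‖x‖ ^ 2 := by
              field_simp
          _ ≤ b * ‖x‖ ^ 2 := by
              exact mul_le_mul_of_nonneg_right h4 (le_of_lt h5)
    have hnorm : M ≤ b := norm_le_of_quadform hT (le_max_right _ _) hball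
    rcases max_cases (M - 1 / (n + 1)) 0 with ⟨he, _⟩ | ⟨he, _⟩
    · rw [hb, he] at hnorm
      have : (0 : ℝ) < 1 / (n + 1) := by positivity
      linarith
    · rw [hb, he] at hnorm
      linarith
  choose x hx1 hx2 using hseq
  -- the quadratic form values lie in a compact interval
  have hqb : ∀ n, re ⟪T (x n), x n⟫ ∈ Set.Icc (-M) M := by
    intro n
    have h1 : |re ⟪T (x n), x n⟫| ≤ M := by
      calc |re ⟪T (x n), x n⟫| ≤ ‖⟪T (x n), x n⟫‖ := abs_re_le_norm _
        _ ≤ ‖T (x n)‖ * ‖x n‖ := norm_inner_le_norm _ _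
        _ ≤ (M * ‖x n‖) * ‖x n‖ := by
            exact mul_le_mul_of_nonneg_right (T.le_opNorm _) (norm_nonneg _)
        _ = M := by rw [hx1 n]; ring
    exact abs_le.mp h1
  obtain ⟨c, hcmem, φ, hφmono, hφtend⟩ :=
    (isCompact_Icc (a := -M) (b := M)).tendsto_subseq hqb
  -- |c| = M
  have habs : |c| = M := by
    have h1 : Tendsto (fun n => |re ⟪T (x (φ n)), x (φ n)⟫|) atTop (nhds |c|) :=
      hφtend.abs
    have h2 : M ≤ |c| := by
      have hlow : Tendsto (fun n : ℕ => M - 1 / (φ n + 1)) atTop (nhds M) := by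
        have h3 : Tendsto (fun n : ℕ => ((n : ℝ) + 1)) atTop atTop :=
          tendsto_atTop_add_const_right _ _ tendsto_natCast_atTop_atTop
        have h4 : Tendsto (fun n : ℕ => ((φ n : ℝ) + 1)) atTop atTop :=
          h3.comp hφmono.tendsto_atTop
        have h5 : Tendsto (fun n : ℕ => M - 1 / (φ n + 1)) atTop (nhds (M - 0)) := by
          refine Tendsto.const_sub _ ?_
          simp only [one_div]; exact h4.inv_tendsto_atTop
        simpa using h5
      exact le_of_tendsto_of_tendsto hlow h1
        (Filter.Eventually.of_forall (fun n => le_of_lt (hx2 (φ n))))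
    have h3 : |c| ≤ M := abs_le.mpr hcmem
    linarith
  have hc0 : c ≠ 0 := by
    intro h
    rw [h] at habs
    simp at habs
    linarith
  -- approximate eigenvector estimate
  have hkey : ∀ n, ‖T (x (φ n)) - (c : ℂ) • x (φ n)‖ ^ 2 ≤
      2 * c ^ 2 - 2 * c * re ⟪T (x (φ n)), x (φ n)⟫ := by
    intro n
    set z := x (φ n)
    have hz1 : ‖z‖ = 1 := hx1 (φ n)
    have hexp : ‖T z - (c : ℂ) • z‖ ^ 2 =
        ‖T z‖ ^ 2 - 2 * c * re ⟪T z, z⟫ + c ^ 2 := by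
      have e1 : ‖T z - (c : ℂ) • z‖ ^ 2 = re ⟪T z - (c : ℂ) • z, T z - (c : ℂ) • z⟫ :=
        (inner_self_eq_norm_sq _).symm
      rw [e1, inner_sub_left, inner_sub_right, inner_sub_right]
      rw [inner_smul_left, inner_smul_right, inner_smul_left, inner_smul_right]
      rw [Complex.conj_ofReal]
      have hsymz : ⟪T z, z⟫ = ⟪z, T z⟫ := hT z z
      have hre1 : re ⟪z, T z⟫ = re ⟪T z, z⟫ := by rw [← hsymz]
      simp only [map_sub, map_add]
      have hmulre : ∀ w : ℂ, re ((c : ℂ) * w) = c * re w := fun w => re_coe_mul _ _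
      rw [hmulre, hmulre, hmulre ((c:ℂ) * ⟪z, z⟫), hmulre]
      rw [inner_self_eq_norm_sq (𝕜 := ℂ) (T z), inner_self_eq_norm_sq (𝕜 := ℂ) z, hre1, hz1]
      ring
    have hT2 : ‖T z‖ ^ 2 ≤ c ^ 2 := by
      have : ‖T z‖ ≤ M := by
        calc ‖T z‖ ≤ M * ‖z‖ := T.le_opNorm z
          _ = M := by rw [hz1]; ring
      have hM2 : M ^ 2 = c ^ 2 := by
        rw [← habs]; rw [sq_abs]
      nlinarith [norm_nonneg (T z)]
    linarith [hexp, hT2]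
  have hdiff : Tendsto (fun n => T (x (φ n)) - (c : ℂ) • x (φ n)) atTop (nhds 0) := by
    have hsq : Tendsto (fun n => ‖T (x (φ n)) - (c : ℂ) • x (φ n)‖ ^ 2) atTop (nhds 0) := by
      have hub : Tendsto (fun n => 2 * c ^ 2 - 2 * c * re ⟪T (x (φ n)), x (φ n)⟫) atTop
          (nhds (2 * c ^ 2 - 2 * c * c)) := by
        exact (tendsto_const_nhds.sub ((hφtend.const_mul (2 * c))))
      have : 2 * c ^ 2 - 2 * c * c = 0 := by ring
      rw [this] at hub
      refine squeeze_zero (fun n => by positivity) hkey hub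
    have hn : Tendsto (fun n => ‖T (x (φ n)) - (c : ℂ) • x (φ n)‖) atTop (nhds 0) := by
      have := hsq.sqrt
      simpa [Real.sqrt_sq (norm_nonneg _)] using this
    exact tendsto_zero_iff_norm_tendsto_zero.mpr hn
  -- compactness: a convergent subsequence of T (x (φ n))
  have himg : ∀ n, T (x (φ n)) ∈ closure (T '' Metric.closedBall 0 1) := by
    intro n
    apply subset_closure
    exact ⟨x (φ n), by simp [hx1 (φ n)], rfl⟩
  obtain ⟨y, _, ψ, hψmono, hψtend⟩ :=
    (hc.isCompact_closure_image_closedBall 1).tendsto_subseq himg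
  have hxcv : Tendsto (fun n => (c : ℂ) • x (φ (ψ n))) atTop (nhds y) := by
    have h1 : Tendsto (fun n => T (x (φ (ψ n))) - (c : ℂ) • x (φ (ψ n))) atTop (nhds 0) :=
      hdiff.comp hψmono.tendsto_atTop
    have h2 : Tendsto (fun n => T (x (φ (ψ n))) -
        (T (x (φ (ψ n))) - (c : ℂ) • x (φ (ψ n)))) atTop (nhds (y - 0)) := hψtend.sub h1
    simpa using h2
  have hcc : (c : ℂ) ≠ 0 := by exact_mod_cast hc0
  have hxcv2 : Tendsto (fun n => x (φ (ψ n))) atTop (nhds (((c : ℂ)⁻¹) • y)) := by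
    refine Tendsto.congr (fun n => ?_) (hxcv.const_smul ((c : ℂ)⁻¹))
    rw [smul_smul, inv_mul_cancel₀ hcc, one_smul]
  have hTy : T (((c : ℂ)⁻¹) • y) = y := by
    have h1 : Tendsto (fun n => T (x (φ (ψ n)))) atTop (nhds (T (((c : ℂ)⁻¹) • y))) :=
      (T.continuous.tendsto _).comp hxcv2
    exact tendsto_nhds_unique h1 hψtend
  have hy0 : y ≠ 0 := by
    intro h
    have h1 : Tendsto (fun n => ‖(c : ℂ) • x (φ (ψ n))‖) atTop (nhds ‖y‖) := hxcv.norm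
    have h2 : ∀ n, ‖(c : ℂ) • x (φ (ψ n))‖ = |c| := by
      intro n
      rw [norm_smul, hx1]
      simp [Complex.norm_real]
    rw [h] at h1
    simp only [h2, norm_zero] at h1
    have h3 : |c| = (0 : ℝ) := tendsto_nhds_unique tendsto_const_nhds h1
    rw [habs] at h3
    linarith
  refine ⟨c, y, hc0, hy0, ?_⟩
  have : T y = (c : ℂ) • T (((c : ℂ)⁻¹) • y) := by
    rw [_root_.map_smul, smul_smul, mul_inv_cancel₀ hcc, one_smul]
  rw [this, hTy]

/-- Quadratic form estimate on the span of eigenspaces with eigenvalue above `c`. -/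
lemma quadform_iSup {T : E →ₗ[ℂ] E} (hT : T.IsSymmetric) (c : ℝ) {x : E}
    (hx : x ∈ ⨆ r : ℝ, ⨆ _ : c < r, Module.End.eigenspace T (r : ℂ)) :
    c * ‖x‖ ^ 2 ≤ re ⟪T x, x⟫ ∧ (x ≠ 0 → c * ‖x‖ ^ 2 < re ⟪T x, x⟫) := by
  rw [iSup_subtype'] at hx
  rw [Submodule.mem_iSup_iff_exists_finsupp] at hx
  obtain ⟨l, hl, hsum⟩ := hx
  have hx' : x = ∑ i ∈ l.support, l i := by
    rw [← hsum]; rfl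
  have horth : ∀ i ∈ l.support, ∀ j ∈ l.support, i ≠ j → ⟪l i, l j⟫ = 0 := by
    intro i _ j _ hij
    have hij' : ((i : {r : ℝ // c < r}) : ℝ) ≠ ((j : {r : ℝ // c < r}) : ℝ) :=
      fun h => hij (Subtype.ext h)
    have hijC : ((i : ℝ) : ℂ) ≠ ((j : ℝ) : ℂ) := by exact_mod_cast hij'
    exact hT.orthogonalFamily_eigenspaces hijC ⟨l i, hl i⟩ ⟨l j, hl j⟩
  have hTeig : ∀ i : {r : ℝ // c < r}, T (l i) = ((i : ℝ) : ℂ) • l i := by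
    intro i
    exact Module.End.mem_eigenspace_iff.mp (hl i)
  have hinner : ⟪T x, x⟫ = ∑ i ∈ l.support, ((i : ℝ) : ℂ) * ⟪l i, l i⟫ := by
    rw [hx', map_sum, sum_inner]
    refine Finset.sum_congr rfl (fun i hi => ?_)
    rw [inner_sum]
    rw [Finset.sum_eq_single i]
    · rw [hTeig, inner_smul_left, Complex.conj_ofReal]
    · intro j hj hji
      rw [hTeig, inner_smul_left]
      rw [horth i hi j hj (Ne.symm hji)]
      ring
    · intro hni
      exact absurd hi hni
  have hnorm : ‖x‖ ^ 2 = ∑ i ∈ l.support, ‖l i‖ ^ 2 := by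
    rw [← inner_self_eq_norm_sq (𝕜 := ℂ) x]
    rw [hx', sum_inner]
    rw [map_sum]
    refine Finset.sum_congr rfl (fun i hi => ?_)
    rw [inner_sum, Finset.sum_eq_single i]
    · exact inner_self_eq_norm_sq (𝕜 := ℂ) (l i)
    · intro j hj hji
      rw [horth i hi j hj (Ne.symm hji)]
    · intro hni
      exact absurd hi hni
  have hre : re ⟪T x, x⟫ = ∑ i ∈ l.support, (i : ℝ) * ‖l i‖ ^ 2 := by
    rw [hinner, map_sum]
    refine Finset.sum_congr rfl (fun i _ => ?_)
    rw [re_coe_mul, inner_self_eq_norm_sq (𝕜 := ℂ)]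
  constructor
  · rw [hre, hnorm, Finset.mul_sum]
    refine Finset.sum_le_sum (fun i _ => ?_)
    exact mul_le_mul_of_nonneg_right (le_of_lt i.2) (by positivity)
  · intro hx0
    have hne : l.support.Nonempty := by
      by_contra hcon
      rw [Finset.not_nonempty_iff_eq_empty] at hcon
      rw [hx', hcon, Finset.sum_empty] at hx0
      exact hx0 rfl
    rw [hre, hnorm, Finset.mul_sum]
    refine Finset.sum_lt_sum_of_nonempty hne (fun i hi => ?_)
    have hli : l i ≠ 0 := Finsupp.mem_support_iff.mp hi
    have hn0 : 0 < ‖l i‖ := norm_pos_iff.mpr hli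
    have : (0:ℝ) < ‖l i‖ ^ 2 := by positivity
    exact (mul_lt_mul_of_pos_right i.2 this)

/-- The quadratic form of a compact symmetric operator is nonnegative on the orthogonal
complement of the span of its negative eigenspaces. -/
lemma nonneg_on_neg_compl [CompleteSpace E] {K : E →L[ℂ] E}
    (hc : IsCompactOperator (K : E → E)) (hK : (K : E →ₗ[ℂ] E).IsSymmetric)
    {f : E}
    (hf : f ∈ (⨆ r : ℝ, ⨆ _ : r < 0, Module.End.eigenspace (K : E →ₗ[ℂ] E) (r : ℂ))ᗮ) :
    0 ≤ re ⟪K f, f⟫ := by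
  set N : Submodule ℂ E := ⨆ r : ℝ, ⨆ _ : r < 0, Module.End.eigenspace (K : E →ₗ[ℂ] E) (r : ℂ)
    with hN
  set P : Submodule ℂ E :=
    ⨆ r : ℝ, ⨆ _ : (0:ℝ) < r, Module.End.eigenspace (K : E →ₗ[ℂ] E) (r : ℂ) with hP
  set P' : Submodule ℂ E := P.topologicalClosure with hP'
  haveI : CompleteSpace P' := P.isClosed_topologicalClosure.completeSpace_coe
  -- eigenspace invariance
  have heig_inv : ∀ (μ : ℂ) z, z ∈ Module.End.eigenspace (K : E →ₗ[ℂ] E) μ →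
      K z ∈ Module.End.eigenspace (K : E →ₗ[ℂ] E) μ := by
    intro μ z hz
    rw [Module.End.mem_eigenspace_iff] at hz ⊢
    calc (K : E →ₗ[ℂ] E) (K z) = K ((K : E →ₗ[ℂ] E) z) := rfl
      _ = K (μ • z) := by rw [hz]
      _ = μ • K z := by rw [ContinuousLinearMap.map_smul]
  have hPinv : ∀ z ∈ P, K z ∈ P := by
    intro z hz
    have : Submodule.map (K : E →ₗ[ℂ] E) P ≤ P := by
      rw [hP, Submodule.map_iSup]
      refine iSup_le (fun r => ?_)
      rw [Submodule.map_iSup]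
      refine iSup_le (fun hr => ?_)
      refine le_trans ?_ (le_iSup₂ (f := fun (r : ℝ) (_ : (0:ℝ) < r) =>
        Module.End.eigenspace (K : E →ₗ[ℂ] E) (r : ℂ)) r hr)
      rintro w ⟨z', hz', rfl⟩
      exact heig_inv _ _ hz'
    exact this ⟨z, hz, rfl⟩
  have hNinv : ∀ z ∈ N, K z ∈ N := by
    intro z hz
    have : Submodule.map (K : E →ₗ[ℂ] E) N ≤ N := by
      rw [hN, Submodule.map_iSup]
      refine iSup_le (fun r => ?_)
      rw [Submodule.map_iSup]
      refine iSup_le (fun hr => ?_)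
      refine le_trans ?_ (le_iSup₂ (f := fun (r : ℝ) (_ : r < (0:ℝ)) =>
        Module.End.eigenspace (K : E →ₗ[ℂ] E) (r : ℂ)) r hr)
      rintro w ⟨z', hz', rfl⟩
      exact heig_inv _ _ hz'
    exact this ⟨z, hz, rfl⟩
  have hP'inv : ∀ z ∈ P', K z ∈ P' := by
    intro z hz
    have hz' : z ∈ closure (P : Set E) := by
      rw [← Submodule.topologicalClosure_coe]
      exact hz
    have : K z ∈ closure (P : Set E) := map_mem_closure K.continuous hz' hPinv
    rwa [← Submodule.topologicalClosure_coe] at this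
  -- orthogonal complements of invariant subspaces are invariant
  have horth_inv : ∀ (V : Submodule ℂ E), (∀ z ∈ V, K z ∈ V) → ∀ z ∈ Vᗮ, K z ∈ Vᗮ := by
    intro V hV z hz
    rw [Submodule.mem_orthogonal]
    intro w hw
    have h1 : ⟪K w, z⟫ = 0 := hz (K w) (hV w hw)
    have h2 : ⟪w, K z⟫ = ⟪K w, z⟫ := (hK w z).symm
    rw [h2, h1]
  -- P ⟂ N
  have hPN : P ⟂ N := by
    rw [hP, Submodule.isOrtho_iSup_left]
    intro r
    rw [Submodule.isOrtho_iSup_left]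
    intro hr
    rw [hN, Submodule.isOrtho_iSup_right]
    intro r'
    rw [Submodule.isOrtho_iSup_right]
    intro hr'
    rw [Submodule.isOrtho_iff_inner_eq]
    intro a ha b hb
    have hne : ((r : ℝ) : ℂ) ≠ ((r' : ℝ) : ℂ) := by
      have : r ≠ r' := by linarith
      exact_mod_cast this
    exact hK.orthogonalFamily_eigenspaces hne ⟨a, ha⟩ ⟨b, hb⟩
  have hP'N : P' ≤ Nᗮ :=
    Submodule.topologicalClosure_minimal P hPN N.isClosed_orthogonal
  -- decompose f
  set v : E := (P'.orthogonalProjectionOnto f : E) with hv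
  set w : E := f - v with hw
  have hwP' : w ∈ P'ᗮ := Submodule.sub_starProjection_mem_orthogonal (K := P') f
  have hvP' : v ∈ P' := Submodule.coe_mem _
  have hwN : w ∈ Nᗮ := Submodule.sub_mem _ hf (hP'N hvP')
  -- the working subspace
  set W : Submodule ℂ E := P'ᗮ ⊓ Nᗮ with hWdef
  have hwW : w ∈ W := ⟨hwP', hwN⟩
  have hWclosed : IsClosed (W : Set E) := by
    rw [hWdef, Submodule.coe_inf]
    exact P'.isClosed_orthogonal.inter N.isClosed_orthogonal
  haveI : CompleteSpace W := hWclosed.completeSpace_coe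
  have hWinv : ∀ z ∈ W, (K : E →ₗ[ℂ] E) z ∈ W := by
    intro z hz
    exact ⟨horth_inv P' hP'inv z hz.1, horth_inv N hNinv z hz.2⟩
  -- the restriction of K to W is compact and symmetric, with no nonzero eigenvalue
  have hSc : IsCompactOperator ((K : E →ₗ[ℂ] E).restrict hWinv) :=
    IsCompactOperator.restrict' hc hWinv
  set S : W →L[ℂ] W := ContinuousLinearMap.mkOfIsCompactOperator hSc with hS
  have hScoe : (S : W →ₗ[ℂ] W) = (K : E →ₗ[ℂ] E).restrict hWinv :=
    ContinuousLinearMap.mkOfIsCompactOperator_to_linearMap hSc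
  have hSsym : (S : W →ₗ[ℂ] W).IsSymmetric := by
    rw [hScoe]
    exact hK.restrict_invariant hWinv
  have hSc' : IsCompactOperator (S : W → W) := by
    have : (S : W → W) = ((K : E →ₗ[ℂ] E).restrict hWinv : W → W) := by
      ext z
      rw [← hScoe]
      rfl
    rwa [this]
  have hS0 : S = 0 := by
    by_contra hS0
    obtain ⟨c, g, hc0, hg0, hgeig⟩ := exists_eigen_s6 hSsym hSc' hS0
    have hgE : K (g : E) = (c : ℂ) • (g : E) := by
      have h1 : ((S g : W) : E) = K (g : E) := by
        have : (S : W →ₗ[ℂ] W) g = (K : E →ₗ[ℂ] E).restrict hWinv g := by rw [hScoe]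
        have h2 := congrArg (Subtype.val) this
        simpa using h2
      rw [← h1, hgeig]
      simp
    rcases lt_trichotomy c 0 with hcneg | hczero | hcpos
    · -- g would be a negative eigenvector, but g ⊥ N
      have hgN : (g : E) ∈ N := by
        have : (g : E) ∈ Module.End.eigenspace (K : E →ₗ[ℂ] E) ((c : ℝ) : ℂ) :=
          Module.End.mem_eigenspace_iff.mpr hgE
        exact (le_iSup₂ (f := fun (r : ℝ) (_ : r < (0:ℝ)) =>
          Module.End.eigenspace (K : E →ₗ[ℂ] E) (r : ℂ)) c hcneg) this
      have hgNo : (g : E) ∈ Nᗮ := g.2.2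
      have : (g : E) = 0 := by
        have h0 := hgNo (g : E) hgN
        exact inner_self_eq_zero.mp h0
      exact hg0 (Subtype.ext this)
    · exact hc0 hczero
    · -- g would be a positive eigenvector, but g ⊥ P'
      have hgP : (g : E) ∈ P := by
        have : (g : E) ∈ Module.End.eigenspace (K : E →ₗ[ℂ] E) ((c : ℝ) : ℂ) :=
          Module.End.mem_eigenspace_iff.mpr hgE
        exact (le_iSup₂ (f := fun (r : ℝ) (_ : (0:ℝ) < r) =>
          Module.End.eigenspace (K : E →ₗ[ℂ] E) (r : ℂ)) c hcpos) this
      have hgP' : (g : E) ∈ P' := P.le_topologicalClosure hgP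
      have hgPo : (g : E) ∈ P'ᗮ := g.2.1
      have : (g : E) = 0 := by
        have h0 := hgPo (g : E) hgP'
        exact inner_self_eq_zero.mp h0
      exact hg0 (Subtype.ext this)
  -- hence K w = 0
  have hKw : K w = 0 := by
    have h1 : S ⟨w, hwW⟩ = 0 := by rw [hS0]; rfl
    have h2 : (S : W →ₗ[ℂ] W) ⟨w, hwW⟩ = (K : E →ₗ[ℂ] E).restrict hWinv ⟨w, hwW⟩ := by
      rw [hScoe]
    have h3 := congrArg Subtype.val h2
    have h4 : ((S ⟨w, hwW⟩ : W) : E) = K w := by simpa using h3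
    rw [h1] at h4
    simpa using h4.symm
  -- now compute
  have hfvw : f = v + w := by rw [hw]; abel
  have hsplit : ⟪K f, f⟫ = ⟪K v, v⟫ + ⟪K v, w⟫ := by
    rw [hfvw, map_add, hKw, add_zero, inner_add_right]
  have hcross : ⟪K v, w⟫ = 0 := hwP' (K v) (hP'inv v hvP')
  -- nonnegativity on the closure of P
  have hPpos : ∀ z ∈ P, 0 ≤ re ⟪K z, z⟫ := by
    intro z hz
    have := (quadform_iSup hK 0 (by rwa [hP] at hz)).1
    simpa using this
  have hvpos : 0 ≤ re ⟪K v, v⟫ := by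
    have hcont : Continuous (fun z : E => re ⟪K z, z⟫) := by
      have h1 : Continuous (fun z : E => ⟪K z, z⟫) :=
        Continuous.inner K.continuous continuous_id
      exact RCLike.continuous_re.comp h1
    have hclosed : IsClosed {z : E | 0 ≤ re ⟪K z, z⟫} :=
      isClosed_le continuous_const hcont
    have hsub : closure (P : Set E) ⊆ {z : E | 0 ≤ re ⟪K z, z⟫} :=
      closure_minimal hPpos hclosed
    have hv' : v ∈ closure (P : Set E) := by
      rw [← Submodule.topologicalClosure_coe]
      exact hvP'
    exact hsub hv'
  rw [hsplit, hcross, add_zero]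
  exact hvpos

end General

section L2facts

local notation "⟪" x ", " y "⟫" => @inner ℂ _ _ x y
open RCLike

lemma U_symmetric (u : ℝ → ℝ) (U : L2 →L[ℂ] L2)
    (hU : ∀ f : L2, (U f : ℝ → ℂ) =ᵐ[μ01] fun t => (u t : ℂ) * f t) :
    (U : L2 →ₗ[ℂ] L2).IsSymmetric := by
  intro f g
  show ⟪U f, g⟫ = ⟪f, U g⟫
  rw [MeasureTheory.L2.inner_def, MeasureTheory.L2.inner_def]
  refine integral_congr_ae ?_
  filter_upwards [hU f, hU g] with t h1 h2
  simp only [RCLike.inner_apply]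
  rw [h1, h2]
  rw [map_mul, Complex.conj_ofReal]
  ring

lemma U_bound (u : ℝ → ℝ) (hu : ContinuousOn u (Icc 0 1))
    (U : L2 →L[ℂ] L2)
    (hU : ∀ f : L2, (U f : ℝ → ℂ) =ᵐ[μ01] fun t => (u t : ℂ) * f t)
    (f : L2) : re ⟪U f, f⟫ ≤ sSup (u '' Icc (0:ℝ) 1) * ‖f‖ ^ 2 := by
  set s : ℝ := sSup (u '' Icc (0:ℝ) 1) with hs
  have hbdd : BddAbove (u '' Icc (0:ℝ) 1) :=
    (isCompact_Icc.image_of_continuousOn hu).bddAbove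
  have hub : ∀ t ∈ Icc (0:ℝ) 1, u t ≤ s :=
    fun t ht => le_csSup hbdd (mem_image_of_mem u ht)
  have hae : ∀ᵐ t ∂μ01, t ∈ Icc (0:ℝ) 1 := ae_restrict_mem measurableSet_Icc
  have h1 : re ⟪U f, f⟫ = ∫ t, re (⟪(U f : ℝ → ℂ) t, (f : ℝ → ℂ) t⟫) ∂μ01 := by
    rw [MeasureTheory.L2.inner_def]
    rw [integral_re (MeasureTheory.L2.integrable_inner _ _)]
  have h2 : ‖f‖ ^ 2 = ∫ t, re (⟪(f : ℝ → ℂ) t, (f : ℝ → ℂ) t⟫) ∂μ01 := by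
    rw [← inner_self_eq_norm_sq (𝕜 := ℂ) f]
    rw [MeasureTheory.L2.inner_def]
    rw [integral_re (MeasureTheory.L2.integrable_inner _ _)]
  rw [h1, h2, ← integral_const_mul]
  refine integral_mono_ae ?_ ?_ ?_
  · exact (MeasureTheory.L2.integrable_inner (𝕜 := ℂ) _ _).re
  · exact ((MeasureTheory.L2.integrable_inner (𝕜 := ℂ) f f).re.const_mul s)
  · filter_upwards [hU f, hae] with t h1t h2t
    simp only [RCLike.inner_apply, h1t]
    rw [mul_comm ((f : ℝ → ℂ) t), mul_comm ((f : ℝ → ℂ) t)]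
    have e1 : re ((starRingEnd ℂ) ((u t : ℂ) * (f : ℝ → ℂ) t) * (f : ℝ → ℂ) t) =
        u t * re ((starRingEnd ℂ) ((f : ℝ → ℂ) t) * (f : ℝ → ℂ) t) := by
      rw [map_mul (starRingEnd ℂ) ((u t : ℂ)) ((f : ℝ → ℂ) t), Complex.conj_ofReal,
        mul_assoc, re_coe_mul]
    rw [e1]
    have e2 : 0 ≤ re ((starRingEnd ℂ) ((f : ℝ → ℂ) t) * (f : ℝ → ℂ) t) := by
      rw [Complex.conj_mul']
      simp only [RCLike.re_to_complex, ← Complex.ofReal_pow, Complex.ofReal_re]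
      positivity
    exact mul_le_mul_of_nonneg_right (hub t h2t) e2

end L2facts

local notation "⟪" x ", " y "⟫" => @inner ℂ _ _ x y

/-- If the compact self-adjoint operator `K` has only finitely many negative
eigenvalues, `m` of them counted with multiplicity, then `U - K` has at most `m`
eigenvalues (counted with multiplicity) strictly above `u_max = sup u`, the top of its
essential spectrum. -/
theorem stmt6 (u : ℝ → ℝ) (hu : ContinuousOn u (Icc 0 1))
    (hupos : ∀ t ∈ Icc (0:ℝ) 1, 0 ≤ u t)
    (U K : L2 →L[ℂ] L2)
    (hU : ∀ f : L2, (U f : ℝ → ℂ) =ᵐ[μ01] fun t => (u t : ℂ) * f t)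
    (hKc : IsCompactOperator (K : L2 → L2)) (hKsa : IsSelfAdjoint K) (m : ℕ)
    (hfin : FiniteDimensional ℂ
      ↥(⨆ r : ℝ, ⨆ _ : r < 0, Module.End.eigenspace (K : L2 →ₗ[ℂ] L2) (r : ℂ)))
    (hcount : Module.finrank ℂ
      ↥(⨆ r : ℝ, ⨆ _ : r < 0, Module.End.eigenspace (K : L2 →ₗ[ℂ] L2) (r : ℂ)) = m) :
    FiniteDimensional ℂ
      ↥(⨆ r : ℝ, ⨆ _ : sSup (u '' Icc (0:ℝ) 1) < r,
        Module.End.eigenspace ((U - K : L2 →L[ℂ] L2) : L2 →ₗ[ℂ] L2) (r : ℂ)) ∧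
    Module.finrank ℂ
      ↥(⨆ r : ℝ, ⨆ _ : sSup (u '' Icc (0:ℝ) 1) < r,
        Module.End.eigenspace ((U - K : L2 →L[ℂ] L2) : L2 →ₗ[ℂ] L2) (r : ℂ)) ≤ m := by
  classical
  set s : ℝ := sSup (u '' Icc (0:ℝ) 1) with hs
  set N : Submodule ℂ L2 :=
    ⨆ r : ℝ, ⨆ _ : r < 0, Module.End.eigenspace (K : L2 →ₗ[ℂ] L2) (r : ℂ) with hN
  set V : Submodule ℂ L2 :=
    ⨆ r : ℝ, ⨆ _ : s < r,
      Module.End.eigenspace ((U - K : L2 →L[ℂ] L2) : L2 →ₗ[ℂ] L2) (r : ℂ) with hV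
  have hKsym : (K : L2 →ₗ[ℂ] L2).IsSymmetric :=
    ContinuousLinearMap.isSelfAdjoint_iff_isSymmetric.mp hKsa
  have hUsym : (U : L2 →ₗ[ℂ] L2).IsSymmetric := U_symmetric u U hU
  have hHsym : ((U - K : L2 →L[ℂ] L2) : L2 →ₗ[ℂ] L2).IsSymmetric := by
    intro f g
    have h1 : ((U - K : L2 →L[ℂ] L2) : L2 →ₗ[ℂ] L2) f = U f - K f := rfl
    have h2 : ((U - K : L2 →L[ℂ] L2) : L2 →ₗ[ℂ] L2) g = U g - K g := rfl
    have hU' : @inner ℂ _ _ (U f) g = @inner ℂ _ _ f (U g) := hUsym f g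
    have hK' : @inner ℂ _ _ (K f) g = @inner ℂ _ _ f (K g) := hKsym f g
    rw [h1, h2, inner_sub_left, inner_sub_right, hU', hK']
  -- key: K is negative definite on V
  have hKneg : ∀ f : L2, f ∈ V → f ≠ 0 → RCLike.re ⟪K f, f⟫ < 0 := by
    intro f hf hf0
    have hq := (quadform_iSup hHsym s (by rwa [hV] at hf)).2 hf0
    have hUb := U_bound u hu U hU f
    have hsub : ⟪(U - K) f, f⟫ = ⟪U f, f⟫ - ⟪K f, f⟫ := by
      have : (U - K) f = U f - K f := rfl
      rw [this, inner_sub_left]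
    have hresub : RCLike.re ⟪(U - K) f, f⟫ =
        RCLike.re ⟪U f, f⟫ - RCLike.re ⟪K f, f⟫ := by
      rw [hsub, map_sub]
    have : s * ‖f‖ ^ 2 < RCLike.re ⟪U f, f⟫ - RCLike.re ⟪K f, f⟫ := by
      rw [← hresub]
      exact hq
    rw [← hs] at hUb
    linarith
  -- N is finite dimensional and complete
  haveI : FiniteDimensional ℂ N := hfin
  haveI : CompleteSpace N := FiniteDimensional.complete ℂ N
  -- the orthogonal projection from V to N is injective
  set Φ : V →ₗ[ℂ] N := (N.orthogonalProjectionOnto).toLinearMap.comp (V.subtype) with hΦ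
  have hinj : Function.Injective Φ := by
    rw [← LinearMap.ker_eq_bot]
    rw [Submodule.eq_bot_iff]
    intro f hfker
    have h1 : N.orthogonalProjectionOnto (f : L2) = 0 := hfker
    have h2 : (f : L2) ∈ Nᗮ := Submodule.orthogonalProjectionOnto_eq_zero_iff.mp h1
    have h3 : 0 ≤ RCLike.re ⟪K (f : L2), (f : L2)⟫ :=
      nonneg_on_neg_compl hKc hKsym h2
    by_contra hf0
    have hf0' : (f : L2) ≠ 0 := fun h => hf0 (Subtype.ext h)
    have h4 := hKneg (f : L2) f.2 hf0'
    linarith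
  constructor
  · exact FiniteDimensional.of_injective Φ hinj
  · haveI : FiniteDimensional ℂ V := FiniteDimensional.of_injective Φ hinj
    calc Module.finrank ℂ V ≤ Module.finrank ℂ N :=
          LinearMap.finrank_le_finrank_of_injective hinj
      _ = m := hcount
end
end

section
/- Let H₁ and H₂ be bounded self-adjoint operators on Hilbert spaces 𝓗₁ and 𝓗₂, and set T = H₁ ⊗ I + I ⊗ H₂ on 𝓗₁ ⊗ 𝓗₂. Then σ(T) = σ(H₁) + σ(H₂) = {α + β : α ∈ σ(H₁), β ∈ σ(H₂)}. -/
open MeasureTheory Set Filter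
open scoped Pointwise

noncomputable section

open scoped InnerProductSpace TensorProduct

section Stmt13Aux

variable {H1 H2 W : Type*}
    [NormedAddCommGroup H1] [InnerProductSpace ℂ H1] [CompleteSpace H1]
    [NormedAddCommGroup H2] [InnerProductSpace ℂ H2] [CompleteSpace H2]
    [NormedAddCommGroup W] [InnerProductSpace ℂ W] [CompleteSpace W]

private theorem exists_on_rep13 {H1 H2 : Type*}
    [NormedAddCommGroup H1] [InnerProductSpace ℂ H1]
    [NormedAddCommGroup H2] [InnerProductSpace ℂ H2]
    (t : TensorProduct ℂ H1 H2) :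
    ∃ (n : ℕ) (x : Fin n → H1) (e : Fin n → H2), Orthonormal ℂ e ∧
      t = ∑ i, x i ⊗ₜ[ℂ] e i := by
  obtain ⟨F, rfl⟩ := TensorProduct.exists_finset t
  set M := Submodule.span ℂ (Prod.snd '' (F : Set (H1 × H2))) with hM
  haveI : FiniteDimensional ℂ M :=
    FiniteDimensional.span_of_finite ℂ ((Finset.finite_toSet F).image _)
  set n := Module.finrank ℂ M
  set b := stdOrthonormalBasis ℂ M with hb
  have he : Orthonormal ℂ (fun i => (b i : H2)) := by
    rw [orthonormal_iff_ite]
    intro i j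
    rw [← Submodule.coe_inner]
    exact orthonormal_iff_ite.mp b.orthonormal i j
  have hmem : ∀ p ∈ F, (p : H1 × H2).2 ∈ M := fun p hp =>
    Submodule.subset_span ⟨p, hp, rfl⟩
  refine ⟨n, fun i => ∑ p ∈ F.attach, (b.repr ⟨p.1.2, hmem p.1 p.2⟩ i) • p.1.1,
    fun i => (b i : H2), he, ?_⟩
  rw [← Finset.sum_attach F (fun p => p.1 ⊗ₜ[ℂ] p.2)]
  have : ∀ i : Fin n,
      ((∑ p ∈ F.attach, (b.repr ⟨p.1.2, hmem p.1 p.2⟩ i) • p.1.1) ⊗ₜ[ℂ] (b i : H2))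
      = ∑ p ∈ F.attach, (b.repr ⟨p.1.2, hmem p.1 p.2⟩ i) • (p.1.1 ⊗ₜ[ℂ] (b i : H2)) := by
    intro i
    rw [TensorProduct.sum_tmul]
    exact Finset.sum_congr rfl fun p _ => by rw [TensorProduct.smul_tmul']
  simp_rw [this]
  rw [Finset.sum_comm]
  refine Finset.sum_congr rfl fun p _ => ?_
  have hrep : ((⟨p.1.2, hmem p.1 p.2⟩ : M) : H2) = ∑ i : Fin n,
      (b.repr ⟨p.1.2, hmem p.1 p.2⟩ i) • (b i : H2) := by
    conv_lhs => rw [← b.sum_repr ⟨p.1.2, hmem p.1 p.2⟩]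
    push_cast
    rfl
  calc p.1.1 ⊗ₜ[ℂ] p.1.2
      = p.1.1 ⊗ₜ[ℂ] (∑ i : Fin n, (b.repr ⟨p.1.2, hmem p.1 p.2⟩ i) • (b i : H2)) := by
        rw [← hrep]
    _ = ∑ i : Fin n, (b.repr ⟨p.1.2, hmem p.1 p.2⟩ i) • (p.1.1 ⊗ₜ[ℂ] (b i : H2)) := by
        rw [TensorProduct.tmul_sum]
        exact Finset.sum_congr rfl fun i _ => by rw [TensorProduct.tmul_smul]

private theorem norm_sum_tm13 (tm : H1 →ₗ[ℂ] H2 →ₗ[ℂ] W)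
    (htm : ∀ (x x' : H1) (y y' : H2),
      (inner ℂ (tm x y) (tm x' y') : ℂ) = (inner ℂ x x' : ℂ) * (inner ℂ y y' : ℂ))
    {n : ℕ} (x : Fin n → H1) (e : Fin n → H2) (he : Orthonormal ℂ e) :
    ‖∑ i, tm (x i) (e i)‖ ^ 2 = ∑ i, ‖x i‖ ^ 2 := by
  have h : (inner ℂ (∑ i, tm (x i) (e i)) (∑ i, tm (x i) (e i)) : ℂ)
      = ∑ i, (inner ℂ (x i) (x i) : ℂ) := by
    rw [inner_sum]
    refine Finset.sum_congr rfl fun j _ => ?_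
    rw [sum_inner]
    rw [Finset.sum_eq_single j]
    · rw [htm, orthonormal_iff_ite.mp he, if_pos rfl, mul_one]
    · intro i _ hij
      rw [htm, orthonormal_iff_ite.mp he, if_neg hij, mul_zero]
    · intro h; exact absurd (Finset.mem_univ j) h
  simp only [inner_self_eq_norm_sq_to_K] at h
  have := congrArg Complex.re h
  rw [Complex.re_sum] at this
  simpa [← Complex.ofReal_pow] using this

private theorem ext_exists13 (tm : H1 →ₗ[ℂ] H2 →ₗ[ℂ] W)
    (htm : ∀ (x x' : H1) (y y' : H2),
      (inner ℂ (tm x y) (tm x' y') : ℂ) = (inner ℂ x x' : ℂ) * (inner ℂ y y' : ℂ))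
    (hdense : Dense
      (Submodule.span ℂ (Set.range fun p : H1 × H2 => tm p.1 p.2) : Set W))
    (S : H1 →L[ℂ] H1) :
    ∃ S' : W →L[ℂ] W, ∀ (x : H1) (y : H2), S' (tm x y) = tm (S x) y := by
  classical
  set L : TensorProduct ℂ H1 H2 →ₗ[ℂ] W := TensorProduct.lift tm with hL
  set g : TensorProduct ℂ H1 H2 →ₗ[ℂ] W :=
    L ∘ₗ TensorProduct.map (S : H1 →ₗ[ℂ] H1) LinearMap.id with hg
  have hLt : ∀ (x : H1) (y : H2), L (x ⊗ₜ[ℂ] y) = tm x y := fun x y => rfl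
  have hgt : ∀ (x : H1) (y : H2), g (x ⊗ₜ[ℂ] y) = tm (S x) y := fun x y => rfl
  have key : ∀ t, ‖g t‖ ≤ ‖S‖ * ‖L t‖ := by
    intro t
    obtain ⟨n, x, e, he, rfl⟩ := exists_on_rep13 t
    have h1 : L (∑ i, x i ⊗ₜ[ℂ] e i) = ∑ i, tm (x i) (e i) := by
      rw [map_sum]; exact Finset.sum_congr rfl fun i _ => hLt _ _
    have h2 : g (∑ i, x i ⊗ₜ[ℂ] e i) = ∑ i, tm (S (x i)) (e i) := by
      rw [map_sum]; exact Finset.sum_congr rfl fun i _ => hgt _ _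
    rw [h1, h2]
    have hgsq : ‖∑ i, tm (S (x i)) (e i)‖ ^ 2 ≤ (‖S‖ * ‖∑ i, tm (x i) (e i)‖) ^ 2 := by
      rw [norm_sum_tm13 tm htm _ e he, mul_pow, norm_sum_tm13 tm htm x e he, Finset.mul_sum]
      refine Finset.sum_le_sum fun i _ => ?_
      have := S.le_opNorm (x i)
      calc ‖S (x i)‖ ^ 2 ≤ (‖S‖ * ‖x i‖) ^ 2 := by
            exact pow_le_pow_left₀ (norm_nonneg _) this 2
        _ = ‖S‖ ^ 2 * ‖x i‖ ^ 2 := by ring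
    have h0 : (0:ℝ) ≤ ‖S‖ * ‖∑ i, tm (x i) (e i)‖ :=
      mul_nonneg (norm_nonneg _) (norm_nonneg _)
    nlinarith [norm_nonneg (∑ i, tm (S (x i)) (e i))]
  set D : Submodule ℂ W := LinearMap.range L with hD
  have hDspan : D = Submodule.span ℂ (Set.range fun p : H1 × H2 => tm p.1 p.2) := by
    rw [hD, LinearMap.range_eq_map, ← TensorProduct.span_tmul_eq_top ℂ H1 H2,
      Submodule.map_span]
    congr 1
    ext w
    constructor
    · rintro ⟨t, ⟨m, n', rfl⟩, rfl⟩
      exact ⟨(m, n'), rfl⟩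
    · rintro ⟨⟨m, n'⟩, rfl⟩
      exact ⟨m ⊗ₜ[ℂ] n', ⟨m, n', rfl⟩, rfl⟩
  have hker : LinearMap.ker L ≤ LinearMap.ker g := by
    intro t ht
    rw [LinearMap.mem_ker] at ht ⊢
    have := key t
    rw [ht, norm_zero, mul_zero] at this
    exact norm_le_zero_iff.mp this
  set f₀ : D →ₗ[ℂ] W :=
    (Submodule.liftQ (LinearMap.ker L) g hker) ∘ₗ
      ((LinearMap.quotKerEquivRange L).symm : D ≃ₗ[ℂ] _) with hf₀
  have hf₀app : ∀ (t : TensorProduct ℂ H1 H2) (h : L t ∈ D), f₀ ⟨L t, h⟩ = g t := by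
    intro t h
    have : (LinearMap.quotKerEquivRange L).symm ⟨L t, h⟩
        = Submodule.Quotient.mk t := by
      rw [LinearEquiv.symm_apply_eq]
      exact Subtype.ext (LinearMap.quotKerEquivRange_apply_mk L t).symm
    simp only [hf₀, LinearMap.coe_comp, Function.comp_apply, LinearEquiv.coe_coe, this]
    exact Submodule.liftQ_apply _ _ _
  have hbound : ∀ d : D, ‖f₀ d‖ ≤ ‖S‖ * ‖d‖ := by
    rintro ⟨w, hw⟩
    obtain ⟨t, rfl⟩ := hw
    rw [hf₀app t (LinearMap.mem_range_self L t)]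
    exact key t
  set f : D →L[ℂ] W := f₀.mkContinuous ‖S‖ hbound with hf
  have h_dense : DenseRange (D.subtypeL) := by
    have : Dense (D : Set W) := hDspan ▸ hdense
    exact this.denseRange_val
  have h_ui : IsUniformInducing (D.subtypeL) := isometry_subtype_coe.isUniformInducing
  refine ⟨f.extend D.subtypeL, fun x y => ?_⟩
  have hmem : tm x y ∈ D := ⟨x ⊗ₜ[ℂ] y, hLt x y⟩
  have : tm x y = D.subtypeL ⟨tm x y, hmem⟩ := rfl
  rw [this, ContinuousLinearMap.extend_eq (h_dense := h_dense) (h_e := h_ui)]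
  show f₀ ⟨tm x y, hmem⟩ = tm (S x) y
  have := hf₀app (x ⊗ₜ[ℂ] y) (by rw [hLt]; exact hmem)
  simp only [hLt] at this
  rw [this, hgt]

private theorem isUnit_of_sa_bb13 {E : Type*} [NormedAddCommGroup E]
    [InnerProductSpace ℂ E] [CompleteSpace E]
    (S : E →L[ℂ] E) (hS : IsSelfAdjoint S) {c : ℝ} (hc : 0 < c)
    (hb : ∀ x, c * ‖x‖ ≤ ‖S x‖) : IsUnit S := by
  have hbd : ∀ x, ‖x‖ ≤ (⟨c, hc.le⟩ : NNReal)⁻¹ * ‖S x‖ := by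
    intro x
    show ‖x‖ ≤ (c : ℝ)⁻¹ * ‖S x‖
    rw [inv_mul_eq_div, le_div_iff₀ hc]
    simpa [mul_comm] using hb x
  have hanti := S.antilipschitz_of_bound hbd
  have hinj : Function.Injective S := hanti.injective
  have hker : LinearMap.ker (S : E →ₗ[ℂ] E) = ⊥ := by
    rw [Submodule.eq_bot_iff]
    intro x hx
    exact hinj (by simpa using hx)
  have hclosed : IsClosed (LinearMap.range (S : E →ₗ[ℂ] E) : Set E) :=
    hanti.isClosed_range S.uniformContinuous
  haveI : CompleteSpace (LinearMap.range (S : E →ₗ[ℂ] E)) := hclosed.completeSpace_coe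
  have hrange : LinearMap.range (S : E →ₗ[ℂ] E) = ⊤ := by
    rw [← Submodule.orthogonal_eq_bot_iff]
    rw [Submodule.eq_bot_iff]
    intro w hw
    have hSw : S w = 0 := by
      have h2 : ∀ x : E, (inner ℂ x (S w) : ℂ) = 0 := by
        intro x
        have h3 : (inner ℂ x (S w) : ℂ) = inner ℂ (S x) w := by
          conv_lhs => rw [← hS.adjoint_eq]
          exact ContinuousLinearMap.adjoint_inner_right _ _ _
        rw [h3]
        exact hw (S x) (LinearMap.mem_range_self (S : E →ₗ[ℂ] E) x)
      have := h2 (S w)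
      rwa [inner_self_eq_zero] at this
    have h4 := hb w
    rw [hSw, norm_zero] at h4
    have h5 : ‖w‖ ≤ 0 := by nlinarith [norm_nonneg w]
    exact norm_le_zero_iff.mp h5
  set e := ContinuousLinearEquiv.ofBijective S hker hrange with he
  refine ⟨⟨S, (e.symm : E →L[ℂ] E), ?_, ?_⟩, rfl⟩
  · ext x
    show S (e.symm x) = x
    have h6 : S (e.symm x) = e (e.symm x) := by
      rw [ContinuousLinearEquiv.coeFn_ofBijective]
    rw [h6, e.apply_symm_apply]
  · ext x
    show e.symm (S x) = x
    have h7 : S x = e x := by rw [ContinuousLinearEquiv.coeFn_ofBijective]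
    rw [h7, e.symm_apply_apply]

private theorem exists_approx13 {E : Type*} [NormedAddCommGroup E]
    [InnerProductSpace ℂ E] [CompleteSpace E]
    (S : E →L[ℂ] E) (hS : IsSelfAdjoint S) (h : ¬ IsUnit S)
    {ε : ℝ} (hε : 0 < ε) : ∃ x : E, ‖x‖ = 1 ∧ ‖S x‖ < ε := by
  by_contra hcon
  push_neg at hcon
  refine h (isUnit_of_sa_bb13 S hS hε (fun x => ?_))
  rcases eq_or_ne x 0 with rfl | hx
  · simp
  · have hn : ‖x‖ ≠ 0 := norm_ne_zero_iff.mpr hx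
    have hu : ‖(‖x‖⁻¹ : ℂ) • x‖ = 1 := by
      rw [norm_smul]
      simp [abs_of_nonneg (norm_nonneg x), hn]
    have hstep := hcon _ hu
    rw [_root_.map_smul, norm_smul] at hstep
    have hnc : ‖((‖x‖ : ℂ))⁻¹‖ = ‖x‖⁻¹ := by
      rw [norm_inv, Complex.norm_real, Real.norm_eq_abs,
        abs_of_nonneg (norm_nonneg x)]
    rw [hnc, inv_mul_eq_div] at hstep
    have hpos : 0 < ‖x‖ := norm_pos_iff.mpr hx
    rw [le_div_iff₀ hpos] at hstep
    exact hstep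

end Stmt13Aux

private theorem spectrum_add_subset_of_comm13 {𝒜 : Type*} [CStarAlgebra 𝒜] [StarModule ℂ 𝒜]
    {a b : 𝒜} (ha : IsSelfAdjoint a) (hb : IsSelfAdjoint b) (hc : a * b = b * a) :
    spectrum ℂ (a + b) ⊆ spectrum ℂ a + spectrum ℂ b := by
  classical
  set s : Set 𝒜 := {a, b} with hs
  have hmem : ∀ x ∈ s, x = a ∨ x = b := by
    intro x hx
    rcases hx with hx | hx
    · exact Or.inl hx
    · exact Or.inr hx
  have hcomm : ∀ x ∈ s, ∀ y ∈ s, x * y = y * x := by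
    intro x hx y hy
    rcases hmem x hx with h1 | h1 <;> rcases hmem y hy with h2 | h2 <;>
      subst h1 <;> subst h2 <;> first | rfl | exact hc | exact hc.symm
  have hcomm_star : ∀ x ∈ s, ∀ y ∈ s, x * star y = star y * x := by
    intro x hx y hy
    rcases hmem y hy with rfl | rfl
    · rw [ha.star_eq]; exact hcomm x hx _ hy
    · rw [hb.star_eq]; exact hcomm x hx _ hy
  set S₀ := StarAlgebra.adjoin ℂ s with hS₀
  have h₀ : ∀ x y : S₀, x * y = y * x :=
    (StarAlgebra.adjoinCommSemiringOfComm ℂ hcomm hcomm_star).mul_comm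
  set S := S₀.topologicalClosure with hS
  haveI hSclosed : IsClosed (S : Set 𝒜) := S₀.isClosed_topologicalClosure
  have hmul : ∀ x y : S, x * y = y * x :=
    (S₀.commSemiringTopologicalClosure h₀).mul_comm
  letI : NormedCommRing S := { (inferInstance : NormedRing S) with mul_comm := hmul }
  have haS : a ∈ S := S₀.le_topologicalClosure (StarAlgebra.subset_adjoin ℂ s (by left; rfl))
  have hbS : b ∈ S := S₀.le_topologicalClosure (StarAlgebra.subset_adjoin ℂ s (by right; rfl))
  set a₀ : S := ⟨a, haS⟩
  set b₀ : S := ⟨b, hbS⟩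
  intro lam hlam
  have hab : a + b = ((a₀ + b₀ : S) : 𝒜) := rfl
  rw [hab, ← StarSubalgebra.spectrum_eq (S := S) (a := a₀ + b₀)] at hlam
  obtain ⟨φ, hφ⟩ := WeakDual.CharacterSpace.mem_spectrum_iff_exists.mp hlam
  have h1 : φ a₀ ∈ spectrum ℂ a := by
    rw [← StarSubalgebra.spectrum_eq (S := S) (a := a₀)]
    exact AlgHom.apply_mem_spectrum φ a₀
  have h2 : φ b₀ ∈ spectrum ℂ b := by
    rw [← StarSubalgebra.spectrum_eq (S := S) (a := b₀)]
    exact AlgHom.apply_mem_spectrum φ b₀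
  have : lam = φ a₀ + φ b₀ := by rw [← hφ, map_add]
  rw [this]
  exact Set.add_mem_add h1 h2

/-- Spectrum of a tensor sum: if `T = H₁ ⊗ I + I ⊗ H₂` on the Hilbert tensor product
`W` of `𝓗₁` and `𝓗₂` (encoded by a bilinear map `tm` with dense span satisfying the
tensor-product inner-product identity), then `σ(T) = σ(H₁) + σ(H₂)` (Minkowski sum). -/
theorem stmt13 {H1 H2 W : Type*}
    [NormedAddCommGroup H1] [InnerProductSpace ℂ H1] [CompleteSpace H1]
    [NormedAddCommGroup H2] [InnerProductSpace ℂ H2] [CompleteSpace H2]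
    [NormedAddCommGroup W] [InnerProductSpace ℂ W] [CompleteSpace W]
    (A : H1 →L[ℂ] H1) (B : H2 →L[ℂ] H2)
    (hA : IsSelfAdjoint A) (hB : IsSelfAdjoint B)
    (T : W →L[ℂ] W) (tm : H1 →ₗ[ℂ] H2 →ₗ[ℂ] W)
    (htm : ∀ (x x' : H1) (y y' : H2),
      (inner ℂ (tm x y) (tm x' y') : ℂ) = (inner ℂ x x' : ℂ) * (inner ℂ y y' : ℂ))
    (hdense : Dense
      (Submodule.span ℂ (Set.range fun p : H1 × H2 => tm p.1 p.2) : Set W))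
    (hT : ∀ (x : H1) (y : H2), T (tm x y) = tm (A x) y + tm x (B y)) :
    spectrum ℂ T = spectrum ℂ A + spectrum ℂ B := by
  classical
  -- norm of elementary tensors
  have norm_tm : ∀ (x : H1) (y : H2), ‖tm x y‖ = ‖x‖ * ‖y‖ := by
    intro x y
    have h := htm x x y y
    rw [inner_self_eq_norm_sq_to_K, inner_self_eq_norm_sq_to_K,
      inner_self_eq_norm_sq_to_K] at h
    have h3 : (‖tm x y‖ : ℝ) ^ 2 = (‖x‖ * ‖y‖) ^ 2 := by
      have h2 : ((‖x‖ : ℂ)) ^ 2 * ((‖y‖ : ℂ)) ^ 2 = (((‖x‖ * ‖y‖) ^ 2 : ℝ) : ℂ) := by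
        push_cast; ring
      have h4 : ((‖tm x y‖ : ℝ) : ℂ) ^ 2 = (((‖x‖ * ‖y‖) ^ 2 : ℝ) : ℂ) :=
        h.trans h2
      exact_mod_cast h4
    have h4 := congrArg Real.sqrt h3
    rwa [Real.sqrt_sq (norm_nonneg _),
      Real.sqrt_sq (mul_nonneg (norm_nonneg _) (norm_nonneg _))] at h4
  -- the flipped tensor map
  have htm' : ∀ (y y' : H2) (x x' : H1),
      (inner ℂ (tm.flip y x) (tm.flip y' x') : ℂ)
        = (inner ℂ y y' : ℂ) * (inner ℂ x x' : ℂ) := by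
    intro y y' x x'
    simp only [LinearMap.flip_apply]
    rw [htm, mul_comm]
  have hrange_eq : (Set.range fun p : H2 × H1 => tm.flip p.1 p.2)
      = (Set.range fun p : H1 × H2 => tm p.1 p.2) := by
    ext w
    constructor
    · rintro ⟨⟨y, x⟩, rfl⟩; exact ⟨(x, y), rfl⟩
    · rintro ⟨⟨x, y⟩, rfl⟩; exact ⟨(y, x), rfl⟩
  have hdense' : Dense
      (Submodule.span ℂ (Set.range fun p : H2 × H1 => tm.flip p.1 p.2) : Set W) := by
    rw [hrange_eq]; exact hdense
  -- the two extension operators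
  obtain ⟨A', hA'⟩ := ext_exists13 tm htm hdense A
  obtain ⟨B', hB'⟩ := ext_exists13 tm.flip htm' hdense' B
  have hB'app : ∀ (x : H1) (y : H2), B' (tm x y) = tm x (B y) := fun x y => hB' y x
  -- T = A' + B'
  have hTsum : T = A' + B' := by
    apply ContinuousLinearMap.ext_on hdense
    rintro _ ⟨⟨x, y⟩, rfl⟩
    simp only [ContinuousLinearMap.add_apply, hA', hB'app, hT]
  -- generic: selfadjointness of extensions
  have sa_ext : ∀ (S : H1 →L[ℂ] H1) (S' : W →L[ℂ] W), IsSelfAdjoint S →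
      (∀ x y, S' (tm x y) = tm (S x) y) → IsSelfAdjoint S' := by
    intro S S' hS hS'
    rw [ContinuousLinearMap.isSelfAdjoint_iff']
    apply ContinuousLinearMap.ext_on hdense
    rintro _ ⟨⟨x, y⟩, rfl⟩
    apply hdense.eq_of_inner_right ℂ
    intro v hv
    rw [ContinuousLinearMap.adjoint_inner_right]
    induction hv using Submodule.span_induction with
    | mem w hw =>
      obtain ⟨⟨x', y'⟩, rfl⟩ := hw
      show (inner ℂ (S' (tm x' y')) (tm x y) : ℂ) = inner ℂ (tm x' y') (S' (tm x y))
      rw [hS' x' y', hS' x y, htm, htm]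
      congr 1
      conv_lhs => rw [← hS.adjoint_eq]
      exact ContinuousLinearMap.adjoint_inner_left _ _ _
    | zero => simp
    | add u v _ _ h1 h2 => rw [map_add, inner_add_left, inner_add_left, h1, h2]
    | smul c u _ h1 => rw [_root_.map_smul, inner_smul_left, inner_smul_left, h1]
  have sa_ext2 : ∀ (S : H2 →L[ℂ] H2) (S' : W →L[ℂ] W), IsSelfAdjoint S →
      (∀ x y, S' (tm x y) = tm x (S y)) → IsSelfAdjoint S' := by
    intro S S' hS hS'
    rw [ContinuousLinearMap.isSelfAdjoint_iff']
    apply ContinuousLinearMap.ext_on hdense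
    rintro _ ⟨⟨x, y⟩, rfl⟩
    apply hdense.eq_of_inner_right ℂ
    intro v hv
    rw [ContinuousLinearMap.adjoint_inner_right]
    induction hv using Submodule.span_induction with
    | mem w hw =>
      obtain ⟨⟨x', y'⟩, rfl⟩ := hw
      show (inner ℂ (S' (tm x' y')) (tm x y) : ℂ) = inner ℂ (tm x' y') (S' (tm x y))
      rw [hS' x' y', hS' x y, htm, htm]
      congr 1
      conv_lhs => rw [← hS.adjoint_eq]
      exact ContinuousLinearMap.adjoint_inner_left _ _ _
    | zero => simp
    | add u v _ _ h1 h2 => rw [map_add, inner_add_left, inner_add_left, h1, h2]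
    | smul c u _ h1 => rw [_root_.map_smul, inner_smul_left, inner_smul_left, h1]
  have hA'sa : IsSelfAdjoint A' := sa_ext A A' hA hA'
  have hB'sa : IsSelfAdjoint B' := sa_ext2 B B' hB hB'app
  -- commutation
  have hcomm : A' * B' = B' * A' := by
    apply ContinuousLinearMap.ext_on hdense
    rintro _ ⟨⟨x, y⟩, rfl⟩
    show A' (B' (tm x y)) = B' (A' (tm x y))
    rw [hB'app, hA', hA', hB'app]
  -- spectral inclusions for the extensions
  have spec_ext : ∀ (S : H1 →L[ℂ] H1) (S' : W →L[ℂ] W),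
      (∀ x y, S' (tm x y) = tm (S x) y) → spectrum ℂ S' ⊆ spectrum ℂ S := by
    intro S S' hS' μ hμ
    by_contra hμA
    have hunit : IsUnit (algebraMap ℂ (H1 →L[ℂ] H1) μ - S) :=
      spectrum.notMem_iff.mp hμA
    obtain ⟨u, hu⟩ := hunit
    obtain ⟨V', hV'⟩ := ext_exists13 tm htm hdense ((u⁻¹ : (H1 →L[ℂ] H1)ˣ) : H1 →L[ℂ] H1)
    have hsub : ∀ (x : H1) (y : H2),
        (algebraMap ℂ (W →L[ℂ] W) μ - S') (tm x y)
          = tm ((algebraMap ℂ (H1 →L[ℂ] H1) μ - S) x) y := by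
      intro x y
      simp only [ContinuousLinearMap.sub_apply, Algebra.algebraMap_eq_smul_one,
        ContinuousLinearMap.smul_apply, ContinuousLinearMap.one_apply, hS',
        map_sub, _root_.map_smul, LinearMap.sub_apply, LinearMap.smul_apply]
    have h1 : (algebraMap ℂ (W →L[ℂ] W) μ - S') * V' = 1 := by
      apply ContinuousLinearMap.ext_on hdense
      rintro _ ⟨⟨x, y⟩, rfl⟩
      show (algebraMap ℂ (W →L[ℂ] W) μ - S') (V' (tm x y)) = tm x y
      rw [hV', hsub]
      have : (algebraMap ℂ (H1 →L[ℂ] H1) μ - S) (((u⁻¹ : (H1 →L[ℂ] H1)ˣ) : H1 →L[ℂ] H1) x)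
          = x := by
        have h := u.mul_inv
        rw [hu] at h
        calc (algebraMap ℂ (H1 →L[ℂ] H1) μ - S) (((u⁻¹ : (H1 →L[ℂ] H1)ˣ) : H1 →L[ℂ] H1) x)
            = ((algebraMap ℂ (H1 →L[ℂ] H1) μ - S) * ((u⁻¹ : (H1 →L[ℂ] H1)ˣ) : H1 →L[ℂ] H1)) x := rfl
          _ = x := by rw [h]; rfl
      rw [this]
    have h2 : V' * (algebraMap ℂ (W →L[ℂ] W) μ - S') = 1 := by
      apply ContinuousLinearMap.ext_on hdense
      rintro _ ⟨⟨x, y⟩, rfl⟩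
      show V' ((algebraMap ℂ (W →L[ℂ] W) μ - S') (tm x y)) = tm x y
      rw [hsub, hV']
      have h := u.inv_mul
      rw [hu] at h
      have : ((u⁻¹ : (H1 →L[ℂ] H1)ˣ) : H1 →L[ℂ] H1)
          ((algebraMap ℂ (H1 →L[ℂ] H1) μ - S) x) = x := by
        calc ((u⁻¹ : (H1 →L[ℂ] H1)ˣ) : H1 →L[ℂ] H1) ((algebraMap ℂ (H1 →L[ℂ] H1) μ - S) x)
            = (((u⁻¹ : (H1 →L[ℂ] H1)ˣ) : H1 →L[ℂ] H1) * (algebraMap ℂ (H1 →L[ℂ] H1) μ - S)) x := rfl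
          _ = x := by rw [h]; rfl
      rw [this]
    exact spectrum.mem_iff.mp hμ ⟨⟨_, V', h1, h2⟩, rfl⟩
  have spec_ext2 : ∀ (S : H2 →L[ℂ] H2) (S' : W →L[ℂ] W),
      (∀ x y, S' (tm x y) = tm x (S y)) → spectrum ℂ S' ⊆ spectrum ℂ S := by
    intro S S' hS' μ hμ
    by_contra hμA
    have hunit : IsUnit (algebraMap ℂ (H2 →L[ℂ] H2) μ - S) :=
      spectrum.notMem_iff.mp hμA
    obtain ⟨u, hu⟩ := hunit
    obtain ⟨V', hV'⟩ := ext_exists13 tm.flip htm' hdense' ((u⁻¹ : (H2 →L[ℂ] H2)ˣ) : H2 →L[ℂ] H2)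
    have hV'app : ∀ (x : H1) (y : H2),
        V' (tm x y) = tm x (((u⁻¹ : (H2 →L[ℂ] H2)ˣ) : H2 →L[ℂ] H2) y) := fun x y => hV' y x
    have hsub : ∀ (x : H1) (y : H2),
        (algebraMap ℂ (W →L[ℂ] W) μ - S') (tm x y)
          = tm x ((algebraMap ℂ (H2 →L[ℂ] H2) μ - S) y) := by
      intro x y
      simp only [ContinuousLinearMap.sub_apply, Algebra.algebraMap_eq_smul_one,
        ContinuousLinearMap.smul_apply, ContinuousLinearMap.one_apply, hS',
        map_sub, _root_.map_smul, LinearMap.sub_apply, LinearMap.smul_apply]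
    have h1 : (algebraMap ℂ (W →L[ℂ] W) μ - S') * V' = 1 := by
      apply ContinuousLinearMap.ext_on hdense
      rintro _ ⟨⟨x, y⟩, rfl⟩
      show (algebraMap ℂ (W →L[ℂ] W) μ - S') (V' (tm x y)) = tm x y
      rw [hV'app, hsub]
      have h := u.mul_inv
      rw [hu] at h
      have : (algebraMap ℂ (H2 →L[ℂ] H2) μ - S) (((u⁻¹ : (H2 →L[ℂ] H2)ˣ) : H2 →L[ℂ] H2) y)
          = y := by
        calc (algebraMap ℂ (H2 →L[ℂ] H2) μ - S) (((u⁻¹ : (H2 →L[ℂ] H2)ˣ) : H2 →L[ℂ] H2) y)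
            = ((algebraMap ℂ (H2 →L[ℂ] H2) μ - S) * ((u⁻¹ : (H2 →L[ℂ] H2)ˣ) : H2 →L[ℂ] H2)) y := rfl
          _ = y := by rw [h]; rfl
      rw [this]
    have h2 : V' * (algebraMap ℂ (W →L[ℂ] W) μ - S') = 1 := by
      apply ContinuousLinearMap.ext_on hdense
      rintro _ ⟨⟨x, y⟩, rfl⟩
      show V' ((algebraMap ℂ (W →L[ℂ] W) μ - S') (tm x y)) = tm x y
      rw [hsub, hV'app]
      have h := u.inv_mul
      rw [hu] at h
      have : ((u⁻¹ : (H2 →L[ℂ] H2)ˣ) : H2 →L[ℂ] H2)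
          ((algebraMap ℂ (H2 →L[ℂ] H2) μ - S) y) = y := by
        calc ((u⁻¹ : (H2 →L[ℂ] H2)ˣ) : H2 →L[ℂ] H2) ((algebraMap ℂ (H2 →L[ℂ] H2) μ - S) y)
            = (((u⁻¹ : (H2 →L[ℂ] H2)ˣ) : H2 →L[ℂ] H2) * (algebraMap ℂ (H2 →L[ℂ] H2) μ - S)) y := rfl
          _ = y := by rw [h]; rfl
      rw [this]
    exact spectrum.mem_iff.mp hμ ⟨⟨_, V', h1, h2⟩, rfl⟩
  apply Set.Subset.antisymm
  · -- σ(T) ⊆ σ(A) + σ(B)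
    rw [hTsum]
    refine (spectrum_add_subset_of_comm13 hA'sa hB'sa hcomm).trans ?_
    exact Set.add_subset_add (spec_ext A A' hA') (spec_ext2 B B' hB'app)
  · -- σ(A) + σ(B) ⊆ σ(T)
    rintro _ ⟨α, hα, β, hβ, rfl⟩
    by_contra hcon
    have hcon' : α + β ∉ spectrum ℂ T := hcon
    have hunit : IsUnit (algebraMap ℂ (W →L[ℂ] W) (α + β) - T) :=
      spectrum.notMem_iff.mp hcon'
    obtain ⟨u, hu⟩ := hunit
    set R : W →L[ℂ] W := ((u⁻¹ : (W →L[ℂ] W)ˣ) : W →L[ℂ] W) with hR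
    set ε : ℝ := 1 / (2 * (‖R‖ + 1)) with hε
    have hRpos : (0:ℝ) < ‖R‖ + 1 := by positivity
    have hεpos : 0 < ε := by positivity
    -- α and β are real
    have hαre : (starRingEnd ℂ) α = α :=
      Complex.conj_eq_iff_re.mpr (hA.mem_spectrum_eq_re hα).symm
    have hβre : (starRingEnd ℂ) β = β :=
      Complex.conj_eq_iff_re.mpr (hB.mem_spectrum_eq_re hβ).symm
    -- approximate eigenvectors
    set Sa : H1 →L[ℂ] H1 := algebraMap ℂ (H1 →L[ℂ] H1) α - A with hSa
    set Sb : H2 →L[ℂ] H2 := algebraMap ℂ (H2 →L[ℂ] H2) β - B with hSb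
    have hSasa : IsSelfAdjoint Sa := by
      rw [IsSelfAdjoint, hSa, star_sub, hA.star_eq]
      congr 1
      rw [← algebraMap_star_comm, Complex.star_def, hαre]
    have hSbsa : IsSelfAdjoint Sb := by
      rw [IsSelfAdjoint, hSb, star_sub, hB.star_eq]
      congr 1
      rw [← algebraMap_star_comm, Complex.star_def, hβre]
    obtain ⟨x, hx1, hx2⟩ := exists_approx13 Sa hSasa (spectrum.mem_iff.mp hα) hεpos
    obtain ⟨y, hy1, hy2⟩ := exists_approx13 Sb hSbsa (spectrum.mem_iff.mp hβ) hεpos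
    set w := tm x y with hw
    have hwnorm : ‖w‖ = 1 := by rw [hw, norm_tm, hx1, hy1, mul_one]
    have happ : (algebraMap ℂ (W →L[ℂ] W) (α + β) - T) w = tm (Sa x) y + tm x (Sb y) := by
      rw [hw]
      simp only [ContinuousLinearMap.sub_apply, Algebra.algebraMap_eq_smul_one,
        ContinuousLinearMap.smul_apply, ContinuousLinearMap.one_apply, hT, hSa, hSb,
        map_sub, _root_.map_smul, LinearMap.sub_apply, LinearMap.smul_apply]
      module
    have hnorm_small : ‖(algebraMap ℂ (W →L[ℂ] W) (α + β) - T) w‖ < 2 * ε := by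
      rw [happ]
      calc ‖tm (Sa x) y + tm x (Sb y)‖ ≤ ‖tm (Sa x) y‖ + ‖tm x (Sb y)‖ := norm_add_le _ _
        _ = ‖Sa x‖ * ‖y‖ + ‖x‖ * ‖Sb y‖ := by rw [norm_tm, norm_tm]
        _ = ‖Sa x‖ + ‖Sb y‖ := by rw [hx1, hy1]; ring
        _ < ε + ε := add_lt_add hx2 hy2
        _ = 2 * ε := by ring
    have hw_eq : w = R ((algebraMap ℂ (W →L[ℂ] W) (α + β) - T) w) := by
      have h := u.inv_mul
      rw [hu] at h
      calc w = (R * (algebraMap ℂ (W →L[ℂ] W) (α + β) - T)) w := by rw [hR, h]; rfl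
        _ = R ((algebraMap ℂ (W →L[ℂ] W) (α + β) - T) w) := rfl
    have hfinal : (1:ℝ) < 1 := by
      calc (1:ℝ) = ‖w‖ := hwnorm.symm
        _ = ‖R ((algebraMap ℂ (W →L[ℂ] W) (α + β) - T) w)‖ := by rw [← hw_eq]
        _ ≤ ‖R‖ * ‖(algebraMap ℂ (W →L[ℂ] W) (α + β) - T) w‖ := R.le_opNorm _
        _ ≤ (‖R‖ + 1) * ‖(algebraMap ℂ (W →L[ℂ] W) (α + β) - T) w‖ := by
            apply mul_le_mul_of_nonneg_right (by linarith) (norm_nonneg _)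
        _ < (‖R‖ + 1) * (2 * ε) := by
            apply mul_lt_mul_of_pos_left hnorm_small hRpos
        _ = 1 := by rw [hε]; field_simp
    exact absurd hfinal (lt_irrefl 1)
end
end

section
/- Let u be a nonnegative continuous function on [0,1], and let {ν_n} be an orthonormal sequence in L²[0,1] with ν_n supported in [p_n, p_{n+1}] (where p_n ↑ 1). Set q_n = sup_{x ∈ [p_n, p_{n+1}]} u(x), and let K be the self-adjoint positive integral operator with kernel k(x,s) = Σ λ_n ν_n(x)ν_n(s), λ_n > 0, Σ λ_n² < ∞. If q_n < λ_n for all n ≥ n₀, then ((U−K)ν_n, ν_n) < 0 for all n ≥ n₀; consequently U − K has infinitely many negative eigenvalues accumulating at 0. -/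
open MeasureTheory Set Filter

noncomputable section

local notation "⟪" x ", " y "⟫" => @inner ℂ _ _ x y

lemma inner_eq_int (f g : L2) : ⟪f, g⟫ = ∫ t, (starRingEnd ℂ) (f t) * g t ∂μ01 := by
  rw [MeasureTheory.L2.inner_def]; simp only [RCLike.inner_apply']

lemma integrable_nsq (f : L2) : Integrable (fun t => ‖(f : ℝ → ℂ) t‖^2) μ01 := by
  have h := (MeasureTheory.L2.integrable_inner (𝕜 := ℂ) f f).re
  refine h.congr (Eventually.of_forall fun t => ?_)
  simp only [inner_self_eq_norm_sq_to_K, ← RCLike.ofReal_pow, RCLike.ofReal_re]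

lemma int_nsq (f : L2) : ∫ t, ‖(f : ℝ → ℂ) t‖^2 ∂μ01 = ‖f‖^2 := by
  have h2 : RCLike.re ⟪f, f⟫ = ‖f‖^2 := inner_self_eq_norm_sq f
  rw [MeasureTheory.L2.inner_def, ← integral_re (MeasureTheory.L2.integrable_inner f f)] at h2
  rw [← h2]
  apply integral_congr_ae
  filter_upwards with t
  simp only [inner_self_eq_norm_sq_to_K, ← RCLike.ofReal_pow, RCLike.ofReal_re]

lemma overlap_null {a b c d : ℝ} (h : c ≤ b) : μ01 (Icc a c ∩ Icc b d) = 0 := by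
  have h1 : Icc a c ∩ Icc b d ⊆ Icc b c := fun x hx => ⟨hx.2.1, hx.1.2⟩
  refine measure_mono_null h1 ?_
  refine le_antisymm ?_ (zero_le)
  calc μ01 (Icc b c) ≤ volume (Icc b c) := Measure.restrict_le_self _
  _ = ENNReal.ofReal (c - b) := by rw [Real.volume_Icc]
  _ = 0 := by rw [ENNReal.ofReal_eq_zero]; linarith

lemma ae_mul_zero {f g : ℝ → ℂ} {s t : Set ℝ}
    (hf : ∀ᵐ x ∂μ01, x ∉ s → f x = 0) (hg : ∀ᵐ x ∂μ01, x ∉ t → g x = 0)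
    (hst : μ01 (s ∩ t) = 0) :
    ∀ᵐ x ∂μ01, (starRingEnd ℂ) (f x) * g x = 0 := by
  have h3 : ∀ᵐ x ∂μ01, x ∉ s ∩ t := by rw [ae_iff]; simpa using hst
  filter_upwards [hf, hg, h3] with x h1 h2 h4
  by_cases hxs : x ∈ s
  · rw [h2 fun hxt => h4 ⟨hxs, hxt⟩, mul_zero]
  · rw [h1 hxs, map_zero, zero_mul]

/-- Example: for `u` continuous, nonnegative, with `u 1 = 0`, and an orthonormal
sequence `ν_n` supported in `[p_n, p_{n+1}]` (with `p_n ↑ 1`), if `K` is the positive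
self-adjoint integral operator with kernel `Σ λ_n ν_n(x) ν̄_n(s)` (so `K ν_n = λ_n ν_n`),
`λ_n > 0`, `Σ λ_n² < ∞`, and `q_n := sup_{[p_n, p_{n+1}]} u < λ_n` for `n ≥ n₀`, then
`((U - K) ν_n, ν_n) < 0` for `n ≥ n₀`, and `U - K` has infinitely many negative
eigenvalues accumulating at `0` (the Efimov effect). -/
theorem stmt19 (u : ℝ → ℝ) (hu : ContinuousOn u (Icc 0 1))
    (hupos : ∀ t ∈ Icc (0:ℝ) 1, 0 ≤ u t) (hu1 : u 1 = 0)
    (p : ℕ → ℝ) (hpmono : StrictMono p) (hp0 : p 0 = 0)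
    (hpmem : ∀ n, p n ∈ Icc (0:ℝ) 1) (hplim : Tendsto p atTop (nhds 1))
    (ν : ℕ → L2) (hν : Orthonormal ℂ ν)
    (hsupp : ∀ n, ∀ᵐ x ∂μ01, x ∉ Icc (p n) (p (n + 1)) → (ν n : ℝ → ℂ) x = 0)
    (lam : ℕ → ℝ) (hlam : ∀ n, 0 < lam n) (hlam2 : Summable fun n => lam n ^ 2)
    (U K : L2 →L[ℂ] L2)
    (hU : ∀ f : L2, (U f : ℝ → ℂ) =ᵐ[μ01] fun t => (u t : ℂ) * f t)
    (hKsa : IsSelfAdjoint K) (hKpos : ∀ f : L2, 0 ≤ K.reApplyInnerSelf f)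
    (hK : ∀ f : L2, K f = ∑' n, ((lam n : ℂ) * (inner ℂ (ν n) f : ℂ)) • ν n)
    (n₀ : ℕ)
    (hqlt : ∀ n ≥ n₀, sSup (u '' Icc (p n) (p (n + 1))) < lam n) :
    (∀ n ≥ n₀, (U - K).reApplyInnerSelf (ν n) < 0) ∧
      ∃ ω : ℕ → ℝ, Function.Injective ω ∧
        (∀ n, ω n < 0 ∧
          Module.End.HasEigenvalue ((U - K : L2 →L[ℂ] L2) : L2 →ₗ[ℂ] L2) ((ω n : ℝ) : ℂ)) ∧
        Tendsto ω atTop (nhds 0) := by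
  classical
  -- a globally continuous nonnegative extension of u
  obtain ⟨v, hvc, hveq, hvmem⟩ :
      ∃ v : ℝ → ℝ, Continuous v ∧ (∀ t ∈ Icc (0:ℝ) 1, v t = u t) ∧
        (∀ t, v t ∈ u '' Icc 0 1) := by
    set proj : ℝ → ℝ := fun t => max 0 (min 1 t) with hproj
    have hc : Continuous proj := continuous_const.max (continuous_const.min continuous_id)
    have hmem : ∀ t, proj t ∈ Icc (0:ℝ) 1 := fun t =>
      ⟨le_max_left _ _, max_le (by norm_num) (min_le_left _ _)⟩
    refine ⟨u ∘ proj, hu.comp_continuous hc hmem, fun t ht => ?_, fun t => ⟨proj t, hmem t, rfl⟩⟩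
    simp only [Function.comp_apply, hproj]
    congr 1
    rw [min_eq_right ht.2, max_eq_right ht.1]
  have hvpos : ∀ t, 0 ≤ v t := fun t => by
    obtain ⟨s, hs, hst⟩ := hvmem t
    rw [← hst]; exact hupos s hs
  have hvbdd : ∃ C, ∀ t, |v t| ≤ C := by
    obtain ⟨C, hC⟩ := (isCompact_Icc.image_of_continuousOn hu).isBounded.exists_norm_le
    exact ⟨C, fun t => hC _ (hvmem t)⟩
  have haeuv : ∀ᵐ t ∂μ01, v t = u t :=
    (ae_restrict_mem measurableSet_Icc).mono fun t ht => hveq t ht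
  have haeIcc : ∀ᵐ t ∂μ01, t ∈ Icc (0:ℝ) 1 := ae_restrict_mem measurableSet_Icc
  -- the blocks
  set I : ℕ → Set ℝ := fun n => Icc (p n) (p (n + 1)) with hI
  have hIsub : ∀ n, I n ⊆ Icc (0:ℝ) 1 := fun n t ht =>
    ⟨le_trans (hpmem n).1 ht.1, le_trans ht.2 (hpmem (n + 1)).2⟩
  set q : ℕ → ℝ := fun n => sSup (u '' I n) with hq
  have hqle : ∀ n, ∀ t ∈ I n, u t ≤ q n := fun n t ht =>
    le_csSup ((isCompact_Icc.image_of_continuousOn (hu.mono (hIsub n))).bddAbove)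
      (mem_image_of_mem u ht)
  have hpmem' : ∀ n, p n ∈ I n := fun n => ⟨le_rfl, (hpmono (Nat.lt_succ_self n)).le⟩
  have hq0 : ∀ n, 0 ≤ q n := fun n =>
    le_trans (hupos (p n) (hpmem (n))) (hqle n (p n) (hpmem' n))
  have hnorm1 : ∀ n, ‖ν n‖ = 1 := fun n => hν.1 n
  have hintnsq : ∀ n, ∫ t, ‖(ν n : ℝ → ℂ) t‖^2 ∂μ01 = 1 := fun n => by
    rw [int_nsq, hnorm1 n, one_pow]
  -- overlap of distinct blocks is null
  have hovl : ∀ k m : ℕ, k ≠ m → μ01 (I k ∩ I m) = 0 := by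
    intro k m hkm
    rcases lt_or_gt_of_ne hkm with h | h
    · exact overlap_null (hpmono.monotone (Nat.succ_le_of_lt h))
    · rw [inter_comm]
      exact overlap_null (hpmono.monotone (Nat.succ_le_of_lt h))
  -- K on ν n
  have horth : ∀ k n : ℕ, ⟪ν k, ν n⟫ = if k = n then 1 else 0 := fun k n =>
    orthonormal_iff_ite.mp hν k n
  have hKν : ∀ n, K (ν n) = (lam n : ℂ) • ν n := by
    intro n
    rw [hK (ν n)]
    rw [tsum_eq_single n (fun k hk => by rw [horth k n, if_neg hk, mul_zero, zero_smul])]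
    rw [horth n n, if_pos rfl, mul_one]
  have hqlt' : ∀ n ≥ n₀, q n < lam n := by
    intro n hn
    rw [hq]
    exact hqlt n hn
  -- Part 1
  have part1 : ∀ n ≥ n₀, (U - K).reApplyInnerSelf (ν n) < 0 := by
    intro n hn
    rw [ContinuousLinearMap.reApplyInnerSelf_apply]
    have hsub : (U - K) (ν n) = U (ν n) - K (ν n) := rfl
    rw [hsub, inner_sub_left, map_sub]
    have hKre : RCLike.re ⟪K (ν n), ν n⟫ = lam n := by
      rw [hKν n, inner_smul_left]
      have h1 : ⟪ν n, ν n⟫ = 1 := by rw [horth n n, if_pos rfl]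
      rw [h1, mul_one, Complex.conj_ofReal]
      exact Complex.ofReal_re _
    have hUre : RCLike.re ⟪U (ν n), ν n⟫ ≤ q n := by
      have hint : ⟪U (ν n), ν n⟫
          = ∫ t, inner ℂ ((U (ν n) : ℝ → ℂ) t) ((ν n : ℝ → ℂ) t) ∂μ01 :=
        MeasureTheory.L2.inner_def _ _
      rw [hint, ← integral_re (MeasureTheory.L2.integrable_inner _ _)]
      have hmono : ∫ t, RCLike.re (inner ℂ ((U (ν n) : ℝ → ℂ) t) ((ν n : ℝ → ℂ) t) : ℂ) ∂μ01
          ≤ ∫ t, q n * ‖(ν n : ℝ → ℂ) t‖^2 ∂μ01 := by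
        refine integral_mono_ae ((MeasureTheory.L2.integrable_inner _ _).re)
          ((integrable_nsq (ν n)).const_mul _) ?_
        filter_upwards [hU (ν n), hsupp n, haeIcc] with t h1 h2 h3
        simp only [RCLike.inner_apply', h1, RCLike.re_to_complex]
        by_cases ht : t ∈ I n
        · rw [map_mul (starRingEnd ℂ) _ _, Complex.conj_ofReal, mul_assoc,
            mul_comm ((starRingEnd ℂ) _) _, Complex.mul_conj, ← Complex.ofReal_mul,
            Complex.ofReal_re, Complex.normSq_eq_norm_sq]
          exact mul_le_mul_of_nonneg_right (hqle n t ht) (sq_nonneg _)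
        · rw [h2 ht]
          simp
      refine le_trans hmono ?_
      rw [integral_const_mul, hintnsq n, mul_one]
    have := hqlt' n hn
    simp only [RCLike.re_to_complex] at hKre hUre ⊢
    linarith
  -- Part 2: explicit eigenvalues via the Birman–Schwinger-type construction
  have key : ∀ m, n₀ ≤ m → ∃ μ : ℝ, 0 < μ ∧ μ ≤ 2 * lam m ∧
      Module.End.HasEigenvalue ((U - K : L2 →L[ℂ] L2) : L2 →ₗ[ℂ] L2) (((-μ : ℝ) : ℂ)) := by
    intro m hm
    set a : ℝ := lam m - q m with ha'
    set b : ℝ := 2 * lam m with hb'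
    have ha : 0 < a := by have := hqlt' m hm; simp only [ha']; linarith
    have hab : a ≤ b := by
      have h1 := hq0 m; have h2 := hlam m
      simp only [ha', hb']; linarith
    have hb : 0 < b := lt_of_lt_of_le ha hab
    have hFi : ∀ μ : ℝ, 0 < μ → Integrable (fun t => (v t + μ)⁻¹ * ‖(ν m : ℝ → ℂ) t‖^2) μ01 := by
      intro μ hμ
      have hpos : ∀ t, 0 < v t + μ := fun t => add_pos_of_nonneg_of_pos (hvpos t) hμ
      refine (integrable_nsq (ν m)).bdd_mul (c := μ⁻¹) ?_ (Eventually.of_forall fun t => ?_)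
      · exact ((hvc.add continuous_const).inv₀ fun t => (hpos t).ne').aestronglyMeasurable
      · rw [Real.norm_eq_abs, abs_of_pos (inv_pos.2 (hpos t))]
        exact inv_anti₀ hμ (le_add_of_nonneg_left (hvpos t))
    set F : ℝ → ℝ := fun μ => ∫ t, (v t + μ)⁻¹ * ‖(ν m : ℝ → ℂ) t‖^2 ∂μ01 with hF'
    have hFcont : ContinuousOn F (Icc a b) := by
      have hc0 : (0:ℝ) ≤ a⁻¹ * a⁻¹ := by positivity
      refine (LipschitzOnWith.of_dist_le_mul (K := (a⁻¹ * a⁻¹).toNNReal) ?_).continuousOn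
      intro μ hμ μ' hμ'
      rw [Real.coe_toNNReal _ hc0]
      have hμ0 : 0 < μ := lt_of_lt_of_le ha hμ.1
      have hμ'0 : 0 < μ' := lt_of_lt_of_le ha hμ'.1
      have hposμ : ∀ t, 0 < v t + μ := fun t => add_pos_of_nonneg_of_pos (hvpos t) hμ0
      have hposμ' : ∀ t, 0 < v t + μ' := fun t => add_pos_of_nonneg_of_pos (hvpos t) hμ'0
      rw [Real.dist_eq, Real.dist_eq]
      have hFdiff : F μ - F μ' = ∫ t,
          ((v t + μ)⁻¹ - (v t + μ')⁻¹) * ‖(ν m : ℝ → ℂ) t‖^2 ∂μ01 := by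
        rw [hF']
        rw [← integral_sub (hFi μ hμ0) (hFi μ' hμ'0)]
        congr 1
        ext t
        ring
      rw [hFdiff]
      refine le_trans (by
        simpa [Real.norm_eq_abs] using
          norm_integral_le_integral_norm
            (fun t => ((v t + μ)⁻¹ - (v t + μ')⁻¹) * ‖(ν m : ℝ → ℂ) t‖^2) (μ := μ01)) ?_
      have hint1 : Integrable
          (fun t => ((v t + μ)⁻¹ - (v t + μ')⁻¹) * ‖(ν m : ℝ → ℂ) t‖^2) μ01 := by
        refine ((hFi μ hμ0).sub (hFi μ' hμ'0)).congr (Eventually.of_forall fun t => ?_)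
        simp only [Pi.sub_apply]; ring
      have hmono : ∫ t, |((v t + μ)⁻¹ - (v t + μ')⁻¹) * ‖(ν m : ℝ → ℂ) t‖^2| ∂μ01
          ≤ ∫ t, (a⁻¹ * a⁻¹ * |μ - μ'|) * ‖(ν m : ℝ → ℂ) t‖^2 ∂μ01 := by
        refine integral_mono_ae hint1.abs ((integrable_nsq (ν m)).const_mul _)
          (Eventually.of_forall fun t => ?_)
        dsimp only
        rw [abs_mul, abs_of_nonneg (sq_nonneg ‖(ν m : ℝ → ℂ) t‖)]
        refine mul_le_mul_of_nonneg_right ?_ (sq_nonneg _)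
        have hdiff : (v t + μ)⁻¹ - (v t + μ')⁻¹ = (μ' - μ) * ((v t + μ)⁻¹ * (v t + μ')⁻¹) := by
          rw [inv_sub_inv (hposμ t).ne' (hposμ' t).ne', div_eq_mul_inv, mul_inv]
          ring
        rw [hdiff, abs_mul]
        rw [abs_of_pos (mul_pos (inv_pos.2 (hposμ t)) (inv_pos.2 (hposμ' t)))]
        have h1 : (v t + μ)⁻¹ ≤ a⁻¹ :=
          inv_anti₀ ha (le_trans hμ.1 (le_add_of_nonneg_left (hvpos t)))
        have h2 : (v t + μ')⁻¹ ≤ a⁻¹ :=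
          inv_anti₀ ha (le_trans hμ'.1 (le_add_of_nonneg_left (hvpos t)))
        rw [abs_sub_comm μ' μ]
        calc |μ - μ'| * ((v t + μ)⁻¹ * (v t + μ')⁻¹) ≤ |μ - μ'| * (a⁻¹ * a⁻¹) := by
              refine mul_le_mul_of_nonneg_left ?_ (abs_nonneg _)
              exact mul_le_mul h1 h2 (le_of_lt (inv_pos.2 (hposμ' t))) (le_of_lt (inv_pos.2 ha))
          _ = a⁻¹ * a⁻¹ * |μ - μ'| := by ring
      refine le_trans hmono ?_
      rw [integral_const_mul, hintnsq m, mul_one]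
    -- bounds at the endpoints
    have hFb : F b ≤ (lam m)⁻¹ := by
      have h1 : F b ≤ ∫ t, b⁻¹ * ‖(ν m : ℝ → ℂ) t‖^2 ∂μ01 := by
        refine integral_mono_ae (hFi b hb) ((integrable_nsq (ν m)).const_mul _)
          (Eventually.of_forall fun t => ?_)
        exact mul_le_mul_of_nonneg_right
          (inv_anti₀ hb (le_add_of_nonneg_left (hvpos t))) (sq_nonneg _)
      rw [integral_const_mul, hintnsq m, mul_one] at h1
      refine le_trans h1 ?_
      rw [hb', mul_inv]
      have h2 : 0 < (lam m)⁻¹ := inv_pos.2 (hlam m)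
      nlinarith
    have hFa : (lam m)⁻¹ ≤ F a := by
      have h1 : ∫ t, (lam m)⁻¹ * ‖(ν m : ℝ → ℂ) t‖^2 ∂μ01 ≤ F a := by
        refine integral_mono_ae ((integrable_nsq (ν m)).const_mul _) (hFi a ha) ?_
        filter_upwards [hsupp m] with t h2
        by_cases ht : t ∈ I m
        · have hva : v t + a ≤ lam m := by
            have h3 : v t = u t := hveq t (hIsub m ht)
            have h4 : u t ≤ q m := hqle m t ht
            rw [ha'] at *
            linarith
          have h5 : 0 < v t + a := add_pos_of_nonneg_of_pos (hvpos t) ha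
          exact mul_le_mul_of_nonneg_right (inv_anti₀ h5 hva) (sq_nonneg _)
        · rw [h2 ht]
          simp
      rwa [integral_const_mul, hintnsq m, mul_one] at h1
    -- intermediate value theorem
    obtain ⟨μ, hμmem, hFμ⟩ : ∃ μ ∈ Icc a b, F μ = (lam m)⁻¹ := by
      have h1 := intermediate_value_Icc' hab hFcont
      obtain ⟨μ, hμ, h⟩ := h1 ⟨hFb, hFa⟩
      exact ⟨μ, hμ, h⟩
    have hμ0 : 0 < μ := lt_of_lt_of_le ha hμmem.1
    have hposμ : ∀ t, 0 < v t + μ := fun t => add_pos_of_nonneg_of_pos (hvpos t) hμ0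
    -- the eigenvector
    have hxmem : MemLp (fun t => (((v t + μ)⁻¹ : ℝ) : ℂ) * (ν m : ℝ → ℂ) t) 2 μ01 := by
      refine MemLp.of_le_mul (c := μ⁻¹) (Lp.memLp (ν m)) ?_ (Eventually.of_forall fun t => ?_)
      · exact ((Complex.continuous_ofReal.comp
          ((hvc.add continuous_const).inv₀ fun t => (hposμ t).ne')).aestronglyMeasurable).mul
          (Lp.aestronglyMeasurable (ν m))
      · rw [norm_mul, Complex.norm_real, Real.norm_eq_abs, abs_of_pos (inv_pos.2 (hposμ t))]
        exact mul_le_mul_of_nonneg_right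
          (inv_anti₀ hμ0 (le_add_of_nonneg_left (hvpos t))) (norm_nonneg _)
    set x : L2 := hxmem.toLp _ with hx'
    have hx : (x : ℝ → ℂ) =ᵐ[μ01] fun t => (((v t + μ)⁻¹ : ℝ) : ℂ) * (ν m : ℝ → ℂ) t :=
      hxmem.coeFn_toLp
    have hxsupp : ∀ᵐ t ∂μ01, t ∉ I m → (x : ℝ → ℂ) t = 0 := by
      filter_upwards [hx, hsupp m] with t h1 h2 ht
      rw [h1, h2 ht, mul_zero]
    have hinner0 : ∀ k, k ≠ m → ⟪ν k, x⟫ = 0 := by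
      intro k hk
      rw [inner_eq_int, integral_congr_ae (ae_mul_zero (hsupp k) hxsupp (hovl k m hk))]
      simp
    have hinnerm : ⟪ν m, x⟫ = ((F μ : ℝ) : ℂ) := by
      rw [inner_eq_int]
      have h1 : ((F μ : ℝ) : ℂ) = ∫ t, (((v t + μ)⁻¹ * ‖(ν m : ℝ → ℂ) t‖^2 : ℝ) : ℂ) ∂μ01 :=
        integral_ofReal.symm
      rw [h1]
      refine integral_congr_ae ?_
      filter_upwards [hx] with t h2
      rw [h2]
      calc (starRingEnd ℂ) ((ν m : ℝ → ℂ) t) * ((((v t + μ)⁻¹ : ℝ) : ℂ) * (ν m : ℝ → ℂ) t)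
          = (((v t + μ)⁻¹ : ℝ) : ℂ) *
            ((ν m : ℝ → ℂ) t * (starRingEnd ℂ) ((ν m : ℝ → ℂ) t)) := by ring
        _ = (((v t + μ)⁻¹ : ℝ) : ℂ) * ((Complex.normSq ((ν m : ℝ → ℂ) t) : ℝ) : ℂ) := by
            rw [Complex.mul_conj]
        _ = (((v t + μ)⁻¹ * ‖(ν m : ℝ → ℂ) t‖^2 : ℝ) : ℂ) := by
            rw [Complex.normSq_eq_norm_sq, ← Complex.ofReal_mul]
    have hKx : K x = ν m := by
      rw [hK x, tsum_eq_single m (fun k hk => by rw [hinner0 k hk, mul_zero, zero_smul])]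
      rw [hinnerm, hFμ]
      rw [show ((lam m : ℂ) * (((lam m)⁻¹ : ℝ) : ℂ)) = 1 by
        rw [← Complex.ofReal_mul, mul_inv_cancel₀ (hlam m).ne', Complex.ofReal_one]]
      rw [one_smul]
    have hUx : U x = ν m - ((μ : ℝ) : ℂ) • x := by
      apply MeasureTheory.Lp.ext
      filter_upwards [hU x, hx, haeuv, Lp.coeFn_sub (ν m) (((μ:ℝ):ℂ) • x),
        Lp.coeFn_smul ((μ:ℝ):ℂ) x] with t h1 hxt huv hsub hsmul
      rw [h1, hsub, Pi.sub_apply, hsmul, Pi.smul_apply, smul_eq_mul, hxt, ← huv]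
      have hr : ((v t + μ) * (v t + μ)⁻¹ : ℝ) = 1 := mul_inv_cancel₀ (hposμ t).ne'
      have hrc : (((v t : ℝ) : ℂ) + ((μ:ℝ):ℂ)) * (((v t + μ)⁻¹ : ℝ) : ℂ) = 1 := by
        rw [← Complex.ofReal_add, ← Complex.ofReal_mul, hr, Complex.ofReal_one]
      linear_combination ((ν m : ℝ → ℂ) t) * hrc
    have heig : (U - K) x = ((-μ : ℝ) : ℂ) • x := by
      have h1 : (U - K) x = U x - K x := rfl
      rw [h1, hUx, hKx, Complex.ofReal_neg, sub_sub_cancel_left, neg_smul]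
    have hxne : x ≠ 0 := by
      intro h0
      have h1 : ⟪ν m, x⟫ = 0 := by rw [h0, inner_zero_right]
      rw [hinnerm, hFμ] at h1
      have h2 : ((lam m)⁻¹ : ℝ) = 0 := by exact_mod_cast h1
      exact (inv_pos.2 (hlam m)).ne' h2
    refine ⟨μ, hμ0, hμmem.2, ?_⟩
    exact Module.End.hasEigenvalue_of_hasEigenvector
      ⟨Module.End.mem_eigenspace_iff.2 (by simpa using heig), hxne⟩
  -- assemble the sequence of eigenvalues
  refine ⟨part1, ?_⟩
  have hlam0 : Tendsto lam atTop (nhds 0) := by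
    have h1 : Tendsto (fun n => lam n ^ 2) atTop (nhds 0) := hlam2.tendsto_atTop_zero
    have h2 : Tendsto (fun n => Real.sqrt (lam n ^ 2)) atTop (nhds 0) :=
      (Real.continuous_sqrt.tendsto' 0 0 Real.sqrt_zero).comp h1
    exact h2.congr fun n => Real.sqrt_sq (hlam n).le
  have hex : ∀ j : ℕ, ∃ r : ℝ, r < 0 ∧ -(2 * lam (n₀ + j)) ≤ r ∧
      Module.End.HasEigenvalue ((U - K : L2 →L[ℂ] L2) : L2 →ₗ[ℂ] L2) ((r : ℝ) : ℂ) := by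
    intro j
    obtain ⟨μ, h1, h2, h3⟩ := key (n₀ + j) (Nat.le_add_right n₀ j)
    exact ⟨-μ, by linarith, by simpa using h2, h3⟩
  choose e heneg hlow hespec using hex
  have hetend : Tendsto e atTop (nhds 0) := by
    have hup : ∀ j, e j ≤ 0 := fun j => (heneg j).le
    have hl : Tendsto (fun j => -(2 * lam (n₀ + j))) atTop (nhds 0) := by
      have h1 : Tendsto (fun j => lam (n₀ + j)) atTop (nhds 0) := by
        refine (hlam0.comp (tendsto_add_atTop_nat n₀)).congr fun j => ?_
        simp [Nat.add_comm]
      have h2 := (h1.const_mul 2).neg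
      simpa using h2
    exact tendsto_of_tendsto_of_tendsto_of_le_of_le hl tendsto_const_nhds hlow hup
  have step : ∀ i : ℕ, ∃ k, i < k ∧ e i < e k := by
    intro i
    have h1 : ∀ᶠ k in atTop, e i < e k := hetend.eventually (eventually_gt_nhds (heneg i))
    exact ((eventually_gt_atTop i).and h1).exists
  set ψ : ℕ → ℕ := fun n => Nat.rec (motive := fun _ => ℕ) 0 (fun _ ih => (step ih).choose) n
    with hψ'
  have hψsucc : ∀ n, ψ n < ψ (n + 1) ∧ e (ψ n) < e (ψ (n + 1)) := fun n =>
    (step (ψ n)).choose_spec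
  have hψmono : StrictMono ψ := strictMono_nat_of_lt_succ fun n => (hψsucc n).1
  have hωmono : StrictMono (fun n => e (ψ n)) := strictMono_nat_of_lt_succ fun n => (hψsucc n).2
  refine ⟨fun n => e (ψ n), hωmono.injective, fun n => ⟨heneg _, hespec _⟩, ?_⟩
  exact hetend.comp hψmono.tendsto_atTop
end
end
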